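/- arXiv:1112.6031 — 8 statements merged into one kernel-verified Lean document; each statement's English description precedes it below -/
import Mathlib

section
/- Let 0 ≤ a < x, α > 0, ρ > 0, and let f be continuous on [a, x]. Then the limit as ρ → 1 of the generalized fractional integral (ρ^{1-α}/Γ(α)) ∫_a^x τ^{ρ-1} (x^ρ - τ^ρ)^{α-1} f(τ) dτ equals the Riemann–Liouville fractional integral (1/Γ(α)) ∫_a^x (x - τ)^{α-1} f(τ) dτ. -/
open MeasureTheory Filter Real

private lemma measurable_rpow_aux (p : ℝ) : Measurable fun τ : ℝ => τ ^ p := by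
  measurability

private lemma measurable_aux1 (p q x : ℝ) :
    Measurable fun τ : ℝ => τ ^ p * (x - τ) ^ q :=
  (measurable_rpow_aux p).mul
    ((measurable_rpow_aux q).comp (measurable_const.sub measurable_id))

private lemma measurable_aux2 (ρ β x : ℝ) :
    Measurable fun τ : ℝ => τ ^ (ρ - 1) * (x ^ ρ - τ ^ ρ) ^ β :=
  (measurable_rpow_aux (ρ - 1)).mul
    ((measurable_rpow_aux β).comp (measurable_const.sub (measurable_rpow_aux ρ)))

set_option maxHeartbeats 1000000 in
/-- For `0 ≤ a < x`, `α > 0` and `f` continuous on `[a, x]`, the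
generalized (Katugampola) fractional integral
`(ρ^{1-α}/Γ(α)) ∫_a^x τ^{ρ-1} (x^ρ - τ^ρ)^{α-1} f(τ) dτ`
tends, as `ρ → 1` (through positive `ρ`), to the Riemann–Liouville fractional integral
`(1/Γ(α)) ∫_a^x (x - τ)^{α-1} f(τ) dτ`. -/
theorem genI_tendsto_riemannLiouville (a x α : ℝ) (ha : 0 ≤ a) (hax : a < x)
    (hα : 0 < α) (f : ℝ → ℝ) (hf : ContinuousOn f (Set.Icc a x)) :
    Tendsto
      (fun ρ : ℝ =>
        (ρ ^ (1 - α) / Real.Gamma α) *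
          ∫ τ in a..x, τ ^ (ρ - 1) * (x ^ ρ - τ ^ ρ) ^ (α - 1) * f τ)
      (nhdsWithin 1 (Set.Ioi (0 : ℝ)))
      (nhds ((1 / Real.Gamma α) * ∫ τ in a..x, (x - τ) ^ (α - 1) * f τ)) := by
  have hx0 : (0:ℝ) < x := lt_of_le_of_lt ha hax
  set mid : ℝ := (a + x)/2 with hmid_def
  have hamid : a < mid := by rw [hmid_def]; linarith
  have hmidx : mid < x := by rw [hmid_def]; linarith
  have hmid0 : 0 < mid := lt_of_le_of_lt ha hamid
  set m : ℝ := min (x ^ (2:ℝ)) (x ^ ((1:ℝ)/2)) with hm_def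
  have hm0 : 0 < m := lt_min (Real.rpow_pos_of_pos hx0 _) (Real.rpow_pos_of_pos hx0 _)
  set M₀ : ℝ := max (x ^ (2:ℝ)) (x ^ ((1:ℝ)/2)) with hM₀_def
  have hM₀0 : 0 ≤ M₀ := le_trans (Real.rpow_pos_of_pos hx0 2).le (le_max_left _ _)
  have hxρm : ∀ ρ ∈ Set.Icc (1/2:ℝ) 2, m ≤ x ^ ρ := by
    intro ρ hρ
    rcases le_total 1 x with h | h
    · exact le_trans (min_le_right _ _)
        (Real.rpow_le_rpow_of_exponent_le h (by linarith [hρ.1]))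
    · exact le_trans (min_le_left _ _)
        (Real.rpow_le_rpow_of_exponent_ge hx0 h hρ.2)
  have hxρM : ∀ ρ ∈ Set.Icc (1/2:ℝ) 2, x ^ ρ ≤ M₀ := by
    intro ρ hρ
    rcases le_total 1 x with h | h
    · exact le_trans (Real.rpow_le_rpow_of_exponent_le h hρ.2) (le_max_left _ _)
    · exact le_trans (Real.rpow_le_rpow_of_exponent_ge hx0 h hρ.1) (le_max_right _ _)
  set c : ℝ := m / (2*x) with hc_def
  have hc0 : 0 < c := div_pos hm0 (by linarith)
  set K : ℝ := (max 1 x) ^ ((3:ℝ)/2) with hK_def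
  have hmax1 : (1:ℝ) ≤ max 1 x := le_max_left _ _
  have hK0 : 0 < K := Real.rpow_pos_of_pos (lt_of_lt_of_le one_pos hmax1) _
  obtain ⟨M, hM⟩ := (isCompact_Icc (a := a) (b := x)).exists_bound_of_continuousOn hf
  have hM0 : 0 ≤ M := le_trans (norm_nonneg _) (hM a (Set.left_mem_Icc.2 hax.le))
  -- key lower bound for `x^ρ - τ^ρ`
  have key : ∀ ρ ∈ Set.Icc (1/2:ℝ) 2, ∀ τ : ℝ, 0 ≤ τ → τ < x →
      c * (x - τ) ≤ x ^ ρ - τ ^ ρ := by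
    intro ρ hρ τ hτ0 hτx
    have hxρ := hxρm ρ hρ
    rcases eq_or_lt_of_le hτ0 with h0 | h0
    · rw [← h0, Real.zero_rpow (by intro h; rw [h] at hρ; norm_num at hρ : ρ ≠ 0), sub_zero,
        sub_zero]
      have hcx : c * x = m / 2 := by rw [hc_def]; field_simp
      rw [hcx]; linarith
    · set u : ℝ := τ / x with hu_def
      have hu0 : 0 < u := div_pos h0 hx0
      have hu1 : u < 1 := (div_lt_one hx0).2 hτx
      have hτu : τ = u * x := by rw [hu_def]; field_simp
      have hτρ : τ ^ ρ = u ^ ρ * x ^ ρ := by rw [hτu, Real.mul_rpow hu0.le hx0.le]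
      set s : ℝ := u ^ ((1:ℝ)/2) with hs_def
      have hs0 : 0 < s := Real.rpow_pos_of_pos hu0 _
      have hs1 : s ≤ 1 := Real.rpow_le_one hu0.le hu1.le (by norm_num)
      have hss : s * s = u := by
        rw [hs_def, ← Real.rpow_add hu0]; norm_num
      have huρ : u ^ ρ ≤ s := by
        rw [hs_def]; exact Real.rpow_le_rpow_of_exponent_ge hu0 hu1.le hρ.1
      have h1 : 1 - u ≤ 2 * (1 - s) := by nlinarith [hss]
      have h2 : m * (1 - s) ≤ x ^ ρ * (1 - u ^ ρ) := by
        nlinarith [mul_nonneg (sub_nonneg.2 hxρ) (sub_nonneg.2 hs1),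
          mul_nonneg (le_trans hm0.le hxρ) (sub_nonneg.2 huρ)]
      have hceq : c * (x - τ) = m * ((1 - u)/2) := by
        rw [hτu, hc_def]; field_simp
      calc c * (x - τ) = m * ((1 - u)/2) := hceq
        _ ≤ m * (1 - s) := by nlinarith [hm0, h1]
        _ ≤ x ^ ρ * (1 - u ^ ρ) := h2
        _ = x ^ ρ - τ ^ ρ := by rw [hτρ]; ring
  -- bound for `τ^(ρ-1)`
  have hKb : ∀ ρ ∈ Set.Icc (1/2:ℝ) 2, ∀ τ : ℝ, 0 < τ → τ ≤ x →
      τ ^ (ρ - 1) ≤ K * τ ^ (-(1/2):ℝ) := by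
    intro ρ hρ τ hτ0 hτx
    have h1 : τ ^ (ρ - 1) = τ ^ (ρ - 1/2) * τ ^ (-(1/2):ℝ) := by
      rw [← Real.rpow_add hτ0]; ring_nf
    rw [h1]
    have h2 : τ ^ (ρ - 1/2) ≤ K := by
      calc τ ^ (ρ - 1/2) ≤ (max 1 x) ^ (ρ - 1/2) :=
            Real.rpow_le_rpow hτ0.le (le_trans hτx (le_max_right _ _)) (by linarith [hρ.1])
        _ ≤ K := by rw [hK_def]; exact Real.rpow_le_rpow_of_exponent_le hmax1 (by linarith [hρ.2])
    exact mul_le_mul_of_nonneg_right h2 (Real.rpow_nonneg hτ0.le _)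
  -- bound for `(x^ρ - τ^ρ)^(α-1)`
  have hpow : ∀ ρ ∈ Set.Icc (1/2:ℝ) 2, ∀ τ : ℝ, 0 ≤ τ → τ < x →
      (x ^ ρ - τ ^ ρ) ^ (α - 1) ≤ c ^ (α-1) * (x - τ) ^ (α-1) + M₀ ^ (α-1) := by
    intro ρ hρ τ hτ0 hτx
    have hA1 := key ρ hρ τ hτ0 hτx
    have hA0 : 0 < c * (x - τ) := mul_pos hc0 (by linarith)
    have hA2 : x ^ ρ - τ ^ ρ ≤ M₀ := by
      have := Real.rpow_nonneg hτ0 ρ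
      have := hxρM ρ hρ
      linarith
    rcases le_total α 1 with hle | hle
    · have h := Real.rpow_le_rpow_of_nonpos hA0 hA1 (by linarith : α - 1 ≤ 0)
      rw [Real.mul_rpow hc0.le (by linarith : (0:ℝ) ≤ x - τ)] at h
      have := Real.rpow_nonneg hM₀0 (α-1)
      linarith
    · have h := Real.rpow_le_rpow (le_of_lt (lt_of_lt_of_le hA0 hA1)) hA2
        (by linarith : (0:ℝ) ≤ α - 1)
      have h1 : 0 ≤ c ^ (α-1) * (x - τ) ^ (α-1) :=
        mul_nonneg (Real.rpow_nonneg hc0.le _) (Real.rpow_nonneg (by linarith) _)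
      linarith
  -- the dominating function
  set bound : ℝ → ℝ := fun τ =>
      (M * K * c ^ (α-1)) * (τ ^ (-(1/2):ℝ) * (x - τ) ^ (α-1))
        + (M * K * M₀ ^ (α-1)) * τ ^ (-(1/2):ℝ) with hbound_def
  have hmeas1 : Measurable fun τ : ℝ => τ ^ (-(1/2):ℝ) * (x - τ) ^ (α-1) :=
    measurable_aux1 _ _ _
  have J2 : IntervalIntegrable (fun τ : ℝ => τ ^ (-(1/2):ℝ)) volume a x :=
    intervalIntegral.intervalIntegrable_rpow' (by norm_num)
  have J1 : IntervalIntegrable (fun τ : ℝ => τ ^ (-(1/2):ℝ) * (x - τ) ^ (α-1)) volume a x := by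
    set C₁ : ℝ := max ((x - mid) ^ (α-1)) ((x - a) ^ (α-1)) with hC₁_def
    have hC₁0 : 0 ≤ C₁ := le_trans (Real.rpow_nonneg (by linarith) _) (le_max_left _ _)
    have part1 : IntervalIntegrable (fun τ : ℝ => τ ^ (-(1/2):ℝ) * (x - τ) ^ (α-1))
        volume a mid := by
      apply IntervalIntegrable.mono_fun
        ((intervalIntegral.intervalIntegrable_rpow' (a := a) (b := mid)
          (by norm_num : (-1:ℝ) < -(1/2))).const_mul C₁)
        hmeas1.aestronglyMeasurable
      filter_upwards [MeasureTheory.ae_restrict_mem measurableSet_uIoc] with τ hτ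
      rw [Set.uIoc_of_le hamid.le] at hτ
      have hτ0 : 0 < τ := lt_of_le_of_lt ha hτ.1
      have hxτ : (x - τ) ^ (α-1) ≤ C₁ := by
        rcases le_total (α - 1) 0 with hneg | hpos
        · refine le_trans (Real.rpow_le_rpow_of_nonpos (by linarith) (by linarith [hτ.2]) hneg)
            (le_max_left _ _)
        · refine le_trans (Real.rpow_le_rpow (by linarith [hτ.2]) (by linarith [hτ.1]) hpos)
            (le_max_right _ _)
      simp only [Real.norm_eq_abs]
      rw [abs_mul, abs_of_nonneg (Real.rpow_nonneg hτ0.le _),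
        abs_of_nonneg (Real.rpow_nonneg (by linarith [hτ.2, hmidx] : (0:ℝ) ≤ x - τ) _),
        abs_of_nonneg (mul_nonneg hC₁0 (Real.rpow_nonneg hτ0.le _))]
      calc τ ^ (-(1/2):ℝ) * (x - τ) ^ (α-1) ≤ τ ^ (-(1/2):ℝ) * C₁ :=
            mul_le_mul_of_nonneg_left hxτ (Real.rpow_nonneg hτ0.le _)
        _ = C₁ * τ ^ (-(1/2):ℝ) := by ring
    have part2 : IntervalIntegrable (fun τ : ℝ => τ ^ (-(1/2):ℝ) * (x - τ) ^ (α-1))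
        volume mid x := by
      have base : IntervalIntegrable (fun t : ℝ => t ^ (α-1)) volume (x - mid) (x - x) :=
        intervalIntegral.intervalIntegrable_rpow' (by linarith)
      have refl := base.comp_sub_left x
      simp only [sub_sub_cancel] at refl
      apply IntervalIntegrable.mono_fun ((refl.const_mul (mid ^ (-(1/2):ℝ))))
        hmeas1.aestronglyMeasurable
      filter_upwards [MeasureTheory.ae_restrict_mem measurableSet_uIoc] with τ hτ
      rw [Set.uIoc_of_le hmidx.le] at hτ
      have hτ0 : 0 < τ := lt_of_lt_of_le hmid0 hτ.1.le
      have h1 : τ ^ (-(1/2):ℝ) ≤ mid ^ (-(1/2):ℝ) :=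
        Real.rpow_le_rpow_of_nonpos hmid0 hτ.1.le (by norm_num)
      simp only [Real.norm_eq_abs]
      rw [abs_mul, abs_of_nonneg (Real.rpow_nonneg hτ0.le _),
        abs_of_nonneg (Real.rpow_nonneg (by linarith [hτ.2] : (0:ℝ) ≤ x - τ) _),
        abs_of_nonneg (mul_nonneg (Real.rpow_nonneg hmid0.le _)
          (Real.rpow_nonneg (by linarith [hτ.2] : (0:ℝ) ≤ x - τ) _))]
      exact mul_le_mul_of_nonneg_right h1
        (Real.rpow_nonneg (by linarith [hτ.2] : (0:ℝ) ≤ x - τ) _)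
    exact part1.trans part2
  have hbound_int : IntervalIntegrable bound volume a x := by
    rw [hbound_def]
    exact (J1.const_mul _).add (J2.const_mul _)
  -- a.e. facts
  have hae : ∀ᵐ τ : ℝ, τ ≠ x := by
    have : volume ({x} : Set ℝ) = 0 := Real.volume_singleton
    rw [MeasureTheory.ae_iff]
    convert this using 2
    ext τ; simp
  -- measurability of the family
  have hfm : AEStronglyMeasurable f (volume.restrict (Set.uIoc a x)) := by
    rw [Set.uIoc_of_le hax.le]
    exact (hf.mono Set.Ioc_subset_Icc_self).aestronglyMeasurable measurableSet_Ioc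
  have hF_meas : ∀ ρ : ℝ, AEStronglyMeasurable
      (fun τ : ℝ => τ ^ (ρ - 1) * (x ^ ρ - τ ^ ρ) ^ (α - 1) * f τ)
      (volume.restrict (Set.uIoc a x)) := by
    intro ρ
    have h1 : Measurable fun τ : ℝ => τ ^ (ρ - 1) * (x ^ ρ - τ ^ ρ) ^ (α - 1) :=
      measurable_aux2 _ _ _
    exact h1.aestronglyMeasurable.mul hfm
  -- eventual membership in Icc (1/2) 2
  have hev : ∀ᶠ ρ in nhdsWithin (1:ℝ) (Set.Ioi 0), ρ ∈ Set.Icc (1/2:ℝ) 2 := by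
    have h : Set.Icc (1/2:ℝ) 2 ∈ nhds (1:ℝ) := Icc_mem_nhds (by norm_num) (by norm_num)
    exact Filter.eventually_of_mem (nhdsWithin_le_nhds h) fun ρ hρ => hρ
  -- dominated convergence for the integral part
  have hint : Tendsto
      (fun ρ : ℝ => ∫ τ in a..x, τ ^ (ρ - 1) * (x ^ ρ - τ ^ ρ) ^ (α - 1) * f τ)
      (nhdsWithin 1 (Set.Ioi (0:ℝ)))
      (nhds (∫ τ in a..x, (x - τ) ^ (α - 1) * f τ)) := by
    apply intervalIntegral.tendsto_integral_filter_of_dominated_convergence bound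
    · exact Filter.Eventually.of_forall hF_meas
    · filter_upwards [hev] with ρ hρ
      filter_upwards [hae] with τ hτx hτ
      rw [Set.uIoc_of_le hax.le] at hτ
      have hτ0 : 0 < τ := lt_of_le_of_lt ha hτ.1
      have hτx' : τ < x := lt_of_le_of_ne hτ.2 hτx
      have h1 := hKb ρ hρ τ hτ0 hτ.2
      have h2 := hpow ρ hρ τ hτ0.le hτx'
      have hfb : |f τ| ≤ M := hM τ ⟨hτ.1.le, hτ.2⟩
      have hn1 : 0 ≤ τ ^ (ρ - 1) := Real.rpow_nonneg hτ0.le _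
      have hn2 : 0 ≤ (x ^ ρ - τ ^ ρ) ^ (α - 1) := Real.rpow_nonneg
        (by linarith [key ρ hρ τ hτ0.le hτx', mul_pos hc0 (by linarith : (0:ℝ) < x - τ)]) _
      simp only [Real.norm_eq_abs]
      rw [abs_mul, abs_mul, abs_of_nonneg hn1, abs_of_nonneg hn2]
      calc τ ^ (ρ - 1) * (x ^ ρ - τ ^ ρ) ^ (α - 1) * |f τ|
          ≤ (K * τ ^ (-(1/2):ℝ)) * (c ^ (α-1) * (x - τ) ^ (α-1) + M₀ ^ (α-1)) * M := by
            have hn3 : 0 ≤ K * τ ^ (-(1/2):ℝ) :=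
              mul_nonneg hK0.le (Real.rpow_nonneg hτ0.le _)
            have hn4 : 0 ≤ c ^ (α-1) * (x - τ) ^ (α-1) + M₀ ^ (α-1) := by
              have := mul_nonneg (Real.rpow_nonneg hc0.le (α-1))
                (Real.rpow_nonneg (by linarith : (0:ℝ) ≤ x - τ) (α-1))
              have := Real.rpow_nonneg hM₀0 (α-1)
              linarith
            exact mul_le_mul (mul_le_mul h1 h2 hn2 hn3) hfb (abs_nonneg _)
              (mul_nonneg hn3 hn4)
        _ = bound τ := by rw [hbound_def]; ring
    · exact hbound_int
    · filter_upwards [hae] with τ hτx hτ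
      rw [Set.uIoc_of_le hax.le] at hτ
      have hτ0 : 0 < τ := lt_of_le_of_lt ha hτ.1
      have hτx' : τ < x := lt_of_le_of_ne hτ.2 hτx
      have T1 : Tendsto (fun ρ : ℝ => τ ^ (ρ - 1)) (nhds 1) (nhds 1) := by
        have h1 : Tendsto (fun ρ : ℝ => ρ - 1) (nhds 1) (nhds 0) := by
          simpa using (continuous_sub_right (1:ℝ)).tendsto 1
        have h2 : Tendsto (fun y : ℝ => τ ^ y) (nhds 0) (nhds 1) := by
          simpa using (Real.continuousAt_const_rpow (a := τ) (b := (0:ℝ)) hτ0.ne').tendsto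
        exact h2.comp h1
      have T2 : Tendsto (fun ρ : ℝ => (x ^ ρ - τ ^ ρ) ^ (α - 1)) (nhds 1)
          (nhds ((x - τ) ^ (α - 1))) := by
        have hin : Tendsto (fun ρ : ℝ => x ^ ρ - τ ^ ρ) (nhds 1) (nhds (x - τ)) := by
          have hx' : ContinuousAt (fun ρ : ℝ => x ^ ρ) 1 :=
            Real.continuousAt_const_rpow hx0.ne'
          have hτ' : ContinuousAt (fun ρ : ℝ => τ ^ ρ) 1 :=
            Real.continuousAt_const_rpow hτ0.ne'
          have h3 := (hx'.sub hτ').tendsto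
          exact (by simpa [Real.rpow_one] using h3 : Tendsto ((fun ρ : ℝ => x ^ ρ) - fun ρ : ℝ => τ ^ ρ) (nhds 1) (nhds (x - τ)))
        have hout : ContinuousAt (fun z : ℝ => z ^ (α - 1)) (x - τ) :=
          Real.continuousAt_rpow_const _ _ (Or.inl (by linarith))
        exact hout.tendsto.comp hin
      have T := (T1.mul T2).mul_const (f τ)
      rw [one_mul] at T
      exact T.mono_left nhdsWithin_le_nhds
  -- prefactor
  have hpre : Tendsto (fun ρ : ℝ => ρ ^ (1 - α) / Real.Gamma α)
      (nhdsWithin 1 (Set.Ioi (0:ℝ))) (nhds (1 / Real.Gamma α)) := by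
    have h : ContinuousAt (fun ρ : ℝ => ρ ^ (1 - α)) 1 :=
      Real.continuousAt_rpow_const _ _ (Or.inl one_ne_zero)
    have h2 : Tendsto (fun ρ : ℝ => ρ ^ (1 - α) / Real.Gamma α) (nhds 1)
        (nhds ((1:ℝ) ^ (1 - α) / Real.Gamma α)) := h.div_const _
    rw [Real.one_rpow] at h2
    exact h2.mono_left nhdsWithin_le_nhds
  exact hpre.mul hint
end

section
/- Let 0 < a < x, α > 0, and let f be continuous on [a, x]. Then the limit as ρ → 0⁺ of the generalized fractional integral (ρ^{1-α}/Γ(α)) ∫_a^x τ^{ρ-1} (x^ρ - τ^ρ)^{α-1} f(τ) dτ equals the Hadamard fractional integral (1/Γ(α)) ∫_a^x (log(x/τ))^{α-1} f(τ) dτ/τ. -/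
open MeasureTheory Filter Real

/-- For `0 < a < x`, `α > 0` and `f` continuous on `[a, x]`, the
generalized (Katugampola) fractional integral
`(ρ^{1-α}/Γ(α)) ∫_a^x τ^{ρ-1} (x^ρ - τ^ρ)^{α-1} f(τ) dτ`
tends, as `ρ → 0⁺`, to the Hadamard fractional integral
`(1/Γ(α)) ∫_a^x (log(x/τ))^{α-1} f(τ) dτ/τ`. -/
theorem genI_tendsto_hadamard (a x α : ℝ) (ha : 0 < a) (hax : a < x)
    (hα : 0 < α) (f : ℝ → ℝ) (hf : ContinuousOn f (Set.Icc a x)) :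
    Tendsto
      (fun ρ : ℝ =>
        (ρ ^ (1 - α) / Real.Gamma α) *
          ∫ τ in a..x, τ ^ (ρ - 1) * (x ^ ρ - τ ^ ρ) ^ (α - 1) * f τ)
      (nhdsWithin 0 (Set.Ioi (0 : ℝ)))
      (nhds ((1 / Real.Gamma α) * ∫ τ in a..x, (Real.log (x / τ)) ^ (α - 1) * f τ / τ)) := by
  have hx0 : 0 < x := ha.trans hax
  set m : ℝ := min 1 a with hm
  set M1 : ℝ := max 1 x with hM1
  have hm0 : 0 < m := lt_min one_pos ha
  have hM10 : 0 < M1 := lt_of_lt_of_le one_pos (le_max_left _ _)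
  obtain ⟨C, hC⟩ := isCompact_Icc.exists_bound_of_continuousOn hf
  have hC0 : 0 ≤ C := le_trans (norm_nonneg _) (hC a ⟨le_refl a, hax.le⟩)
  set g : ℝ → ℝ → ℝ := fun ρ τ => τ ^ (ρ - 1) * ((x ^ ρ - τ ^ ρ) / ρ) ^ (α - 1) * f τ
    with hg
  set G : ℝ → ℝ := fun τ => Real.log (x / τ) ^ (α - 1) * f τ / τ with hG
  -- upper and lower bounds for t ^ ρ
  have hub : ∀ t ρ : ℝ, 0 < t → t ≤ x → 0 < ρ → ρ ≤ 1 → t ^ ρ ≤ M1 := by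
    intro t ρ ht0 htx hρ0 hρ1
    rcases le_total t 1 with h1 | h1
    · exact le_trans (Real.rpow_le_one ht0.le h1 hρ0.le) (le_max_left _ _)
    · calc t ^ ρ ≤ t ^ (1 : ℝ) := Real.rpow_le_rpow_of_exponent_le h1 hρ1
        _ = t := Real.rpow_one t
        _ ≤ M1 := le_trans htx (le_max_right _ _)
  have hlb : ∀ t ρ : ℝ, a ≤ t → 0 < ρ → ρ ≤ 1 → m ≤ t ^ ρ := by
    intro t ρ hat hρ0 hρ1
    have ht0 : 0 < t := lt_of_lt_of_le ha hat
    rcases le_total 1 t with h1 | h1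
    · exact le_trans (min_le_left _ _) (Real.one_le_rpow h1 hρ0.le)
    · calc m ≤ a := min_le_right _ _
        _ ≤ t := hat
        _ = t ^ (1 : ℝ) := (Real.rpow_one t).symm
        _ ≤ t ^ ρ := Real.rpow_le_rpow_of_exponent_ge ht0 h1 hρ1
  -- the key sandwich
  have hsand : ∀ ρ τ : ℝ, 0 < ρ → ρ ≤ 1 → a ≤ τ → τ ≤ x →
      ρ * (m * Real.log (x / τ)) ≤ x ^ ρ - τ ^ ρ ∧
        x ^ ρ - τ ^ ρ ≤ ρ * (M1 * Real.log (x / τ)) := by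
    intro ρ τ hρ0 hρ1 haτ hτx
    have hτ0 : 0 < τ := lt_of_lt_of_le ha haτ
    set L : ℝ := Real.log (x / τ) with hL
    have hL0 : 0 ≤ L := Real.log_nonneg ((one_le_div hτ0).2 hτx)
    have e1 : (x / τ) ^ ρ * τ ^ ρ = x ^ ρ := by
      rw [← Real.mul_rpow (by positivity) hτ0.le, div_mul_cancel₀ _ hτ0.ne']
    have e2 : (τ / x) ^ ρ * x ^ ρ = τ ^ ρ := by
      rw [← Real.mul_rpow (by positivity) hx0.le, div_mul_cancel₀ _ hx0.ne']
    have hexp1 : 1 + ρ * L ≤ (x / τ) ^ ρ := by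
      rw [Real.rpow_def_of_pos (div_pos hx0 hτ0)]
      have := Real.add_one_le_exp (Real.log (x / τ) * ρ)
      nlinarith [this]
    have hlogτx : Real.log (τ / x) = -L := by
      rw [hL, Real.log_div hτ0.ne' hx0.ne', Real.log_div hx0.ne' hτ0.ne']; ring
    have hexp2 : 1 - ρ * L ≤ (τ / x) ^ ρ := by
      rw [Real.rpow_def_of_pos (div_pos hτ0 hx0), hlogτx]
      have := Real.add_one_le_exp (-L * ρ)
      nlinarith [this]
    constructor
    · have hτρm : m ≤ τ ^ ρ := hlb τ ρ haτ hρ0 hρ1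
      calc ρ * (m * L) = m * (ρ * L) := by ring
        _ ≤ τ ^ ρ * ((x / τ) ^ ρ - 1) := by
            apply mul_le_mul hτρm (by linarith) (by positivity) (by positivity)
        _ = x ^ ρ - τ ^ ρ := by rw [← e1]; ring
    · have hxρ : x ^ ρ ≤ M1 := hub x ρ hx0 le_rfl hρ0 hρ1
      calc x ^ ρ - τ ^ ρ = x ^ ρ * (1 - (τ / x) ^ ρ) := by rw [← e2]; ring
        _ ≤ M1 * (ρ * L) := by
            apply mul_le_mul hxρ (by linarith)
              (by
                have : (τ / x) ^ ρ ≤ 1 :=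
                  Real.rpow_le_one (by positivity) ((div_le_one hx0).2 hτx) hρ0.le
                linarith)
              hM10.le
        _ = ρ * (M1 * L) := by ring
  set K3 : ℝ := M1 / a * max (M1 ^ (α - 1)) (m ^ (α - 1)) * C with hK3
  have hK30 : 0 ≤ K3 := by
    apply mul_nonneg (mul_nonneg (by positivity) _) hC0
    exact le_trans (Real.rpow_nonneg hM10.le _) (le_max_left _ _)
  set K5 : ℝ := K3 * max (x ^ (1 - α)) (Real.log (x / a) ^ (α - 1)) with hK5
  have hK50 : 0 ≤ K5 := by
    apply mul_nonneg hK30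
    exact le_trans (Real.rpow_nonneg hx0.le _) (le_max_left _ _)
  have hLa : 0 < Real.log (x / a) := Real.log_pos ((one_lt_div ha).2 hax)
  -- pointwise bound
  have hbnd : ∀ ρ τ : ℝ, 0 < ρ → ρ ≤ 1 → a < τ → τ < x →
      ‖g ρ τ‖ ≤ K5 * ((x - τ) ^ (α - 1) + 1) := by
    intro ρ τ hρ0 hρ1 haτ hτx
    have hτ0 : 0 < τ := ha.trans haτ
    set L : ℝ := Real.log (x / τ) with hL
    have hL0 : 0 < L := Real.log_pos ((one_lt_div hτ0).2 hτx)
    obtain ⟨hs1, hs2⟩ := hsand ρ τ hρ0 hρ1 haτ.le hτx.le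
    set h : ℝ := (x ^ ρ - τ ^ ρ) / ρ with hh
    have hml : m * L ≤ h := (le_div_iff₀ hρ0).2 (by linarith)
    have hMu : h ≤ M1 * L := (div_le_iff₀ hρ0).2 (by linarith)
    have hpos : 0 < h := lt_of_lt_of_le (by positivity) hml
    -- first factor
    have ht1 : τ ^ (ρ - 1) ≤ M1 / a := by
      rw [Real.rpow_sub hτ0, Real.rpow_one]
      exact div_le_div₀ hM10.le (hub τ ρ hτ0 hτx.le hρ0 hρ1) ha haτ.le
    -- middle factor
    have ht2 : h ^ (α - 1) ≤ max (M1 ^ (α - 1)) (m ^ (α - 1)) * L ^ (α - 1) := by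
      rcases le_or_gt 1 α with h1 | h1
      · calc h ^ (α - 1) ≤ (M1 * L) ^ (α - 1) :=
              Real.rpow_le_rpow hpos.le hMu (by linarith)
          _ = M1 ^ (α - 1) * L ^ (α - 1) := Real.mul_rpow hM10.le hL0.le
          _ ≤ _ := mul_le_mul_of_nonneg_right (le_max_left _ _) (Real.rpow_nonneg hL0.le _)
      · calc h ^ (α - 1) ≤ (m * L) ^ (α - 1) :=
              Real.rpow_le_rpow_of_nonpos (by positivity) hml (by linarith)
          _ = m ^ (α - 1) * L ^ (α - 1) := Real.mul_rpow hm0.le hL0.le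
          _ ≤ _ := mul_le_mul_of_nonneg_right (le_max_right _ _) (Real.rpow_nonneg hL0.le _)
    have hfτ : |f τ| ≤ C := hC τ ⟨haτ.le, hτx.le⟩
    have hstep1 : ‖g ρ τ‖ ≤ K3 * L ^ (α - 1) := by
      rw [hg]
      simp only [Real.norm_eq_abs, abs_mul]
      rw [abs_of_nonneg (Real.rpow_nonneg hτ0.le _), abs_of_nonneg (Real.rpow_nonneg (by positivity) _)]
      calc τ ^ (ρ - 1) * ((x ^ ρ - τ ^ ρ) / ρ) ^ (α - 1) * |f τ|
          ≤ M1 / a * (max (M1 ^ (α - 1)) (m ^ (α - 1)) * L ^ (α - 1)) * C := by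
            apply mul_le_mul _ hfτ (abs_nonneg _)
              (mul_nonneg (by positivity)
                (mul_nonneg (le_trans (Real.rpow_nonneg hM10.le _) (le_max_left _ _))
                  (Real.rpow_nonneg hL0.le _)))
            exact mul_le_mul ht1 ht2 (Real.rpow_nonneg (by positivity) _) (by positivity)
        _ = K3 * L ^ (α - 1) := by rw [hK3]; ring
    have hstep2 : K3 * L ^ (α - 1) ≤ K5 * ((x - τ) ^ (α - 1) + 1) := by
      rcases le_or_gt 1 α with h1 | h1
      · have hLle : L ≤ Real.log (x / a) :=
          Real.log_le_log (by positivity) (div_le_div_of_nonneg_left hx0.le ha haτ.le)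
        have : L ^ (α - 1) ≤ Real.log (x / a) ^ (α - 1) :=
          Real.rpow_le_rpow hL0.le hLle (by linarith)
        calc K3 * L ^ (α - 1) ≤ K3 * Real.log (x / a) ^ (α - 1) :=
              mul_le_mul_of_nonneg_left this hK30
          _ ≤ K5 * 1 := by
              rw [mul_one, hK5]
              exact mul_le_mul_of_nonneg_left (le_max_right _ _) hK30
          _ ≤ K5 * ((x - τ) ^ (α - 1) + 1) := by
              apply mul_le_mul_of_nonneg_left _ hK50
              have : 0 ≤ (x - τ) ^ (α - 1) := Real.rpow_nonneg (by linarith) _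
              linarith
      · have hq : (x - τ) / x ≤ L := by
          have := Real.log_le_sub_one_of_pos (div_pos hτ0 hx0)
          have hlogτx : Real.log (τ / x) = -L := by
            rw [hL, Real.log_div hτ0.ne' hx0.ne', Real.log_div hx0.ne' hτ0.ne']; ring
          rw [hlogτx] at this
          have hxx : (x - τ) / x = 1 - τ / x := by field_simp
          rw [hxx]; linarith
        have hq0 : 0 < (x - τ) / x := div_pos (by linarith) hx0
        have h2 : L ^ (α - 1) ≤ ((x - τ) / x) ^ (α - 1) :=
          Real.rpow_le_rpow_of_nonpos hq0 hq (by linarith)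
        have h3 : ((x - τ) / x) ^ (α - 1) = (x - τ) ^ (α - 1) * x ^ (1 - α) := by
          rw [Real.div_rpow (by linarith) hx0.le, div_eq_mul_inv, ← Real.rpow_neg hx0.le,
            neg_sub]
        calc K3 * L ^ (α - 1) ≤ K3 * ((x - τ) ^ (α - 1) * x ^ (1 - α)) := by
              rw [← h3]; exact mul_le_mul_of_nonneg_left h2 hK30
          _ = K3 * x ^ (1 - α) * (x - τ) ^ (α - 1) := by ring
          _ ≤ K5 * (x - τ) ^ (α - 1) := by
              apply mul_le_mul_of_nonneg_right _ (Real.rpow_nonneg (by linarith) _)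
              exact mul_le_mul_of_nonneg_left (le_max_left _ _) hK30
          _ ≤ K5 * ((x - τ) ^ (α - 1) + 1) := by
              apply mul_le_mul_of_nonneg_left _ hK50; linarith
    exact hstep1.trans hstep2
  -- a.e. statement that τ ≠ x
  have hx_ae : ∀ᵐ τ : ℝ, τ ≠ x := by
    rw [MeasureTheory.ae_iff]
    simpa using MeasureTheory.measure_singleton (μ := volume) x
  -- measurability of f on the interval
  have hfae : AEStronglyMeasurable f (volume.restrict (Set.uIoc a x)) := by
    rw [Set.uIoc_of_le hax.le]
    exact (hf.mono Set.Ioc_subset_Icc_self).aestronglyMeasurable measurableSet_Ioc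
  -- pointwise limit
  have hlim : ∀ τ : ℝ, a < τ → τ < x →
      Tendsto (fun ρ => g ρ τ) (nhdsWithin 0 (Set.Ioi (0 : ℝ))) (nhds (G τ)) := by
    intro τ haτ hτx
    have hτ0 : 0 < τ := ha.trans haτ
    set L : ℝ := Real.log (x / τ) with hL
    have hL0 : 0 < L := Real.log_pos ((one_lt_div hτ0).2 hτx)
    -- first factor
    have hA : Tendsto (fun ρ : ℝ => τ ^ (ρ - 1)) (nhdsWithin 0 (Set.Ioi (0 : ℝ)))
        (nhds (τ ^ ((0 : ℝ) - 1))) := by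
      have hc : ContinuousAt (fun ρ : ℝ => τ ^ (ρ - 1)) 0 := by
        have he : (fun ρ : ℝ => τ ^ (ρ - 1)) = fun ρ => Real.exp (Real.log τ * (ρ - 1)) :=
          funext fun ρ => Real.rpow_def_of_pos hτ0 _
        rw [he]
        exact (Real.continuous_exp.comp
          (continuous_const.mul (continuous_id.sub continuous_const))).continuousAt
      have : τ ^ ((0 : ℝ) - 1) = (fun ρ : ℝ => τ ^ (ρ - 1)) 0 := rfl
      rw [this]
      exact hc.continuousWithinAt.tendsto
    -- second factor
    have hDx : HasDerivAt (fun ρ : ℝ => x ^ ρ) (Real.log x) 0 := by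
      have he : (fun ρ : ℝ => x ^ ρ) = fun ρ => Real.exp (Real.log x * ρ) :=
        funext fun ρ => Real.rpow_def_of_pos hx0 _
      rw [he]
      have := (((hasDerivAt_id (0 : ℝ)).const_mul (Real.log x)).exp)
      simpa using this
    have hDτ : HasDerivAt (fun ρ : ℝ => τ ^ ρ) (Real.log τ) 0 := by
      have he : (fun ρ : ℝ => τ ^ ρ) = fun ρ => Real.exp (Real.log τ * ρ) :=
        funext fun ρ => Real.rpow_def_of_pos hτ0 _
      rw [he]
      have := (((hasDerivAt_id (0 : ℝ)).const_mul (Real.log τ)).exp)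
      simpa using this
    have hD := hDx.sub hDτ
    rw [hasDerivAt_iff_tendsto_slope] at hD
    have hmono : nhdsWithin (0 : ℝ) (Set.Ioi (0 : ℝ)) ≤ nhdsWithin 0 {(0 : ℝ)}ᶜ :=
      nhdsWithin_mono 0 fun y hy => ne_of_gt hy
    have hB0 := hD.mono_left hmono
    have hB : Tendsto (fun ρ : ℝ => (x ^ ρ - τ ^ ρ) / ρ) (nhdsWithin 0 (Set.Ioi (0 : ℝ)))
        (nhds L) := by
      have heq : ∀ ρ : ℝ, slope (fun ρ : ℝ => x ^ ρ - τ ^ ρ) 0 ρ = (x ^ ρ - τ ^ ρ) / ρ := by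
        intro ρ
        simp [slope_def_field, Real.rpow_zero]
      have hLeq : L = Real.log x - Real.log τ := by
        rw [hL, Real.log_div hx0.ne' hτ0.ne']
      rw [hLeq]
      exact hB0.congr heq
    have hCc : Tendsto (fun ρ : ℝ => ((x ^ ρ - τ ^ ρ) / ρ) ^ (α - 1))
        (nhdsWithin 0 (Set.Ioi (0 : ℝ))) (nhds (L ^ (α - 1))) :=
      ((Real.continuousAt_rpow_const L (α - 1) (Or.inl hL0.ne')).tendsto).comp hB
    have htot := (hA.mul hCc).mul (tendsto_const_nhds (x := f τ))
    have hval : τ ^ ((0 : ℝ) - 1) * L ^ (α - 1) * f τ = G τ := by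
      rw [hG, zero_sub, Real.rpow_neg_one]; simp only [← hL]; ring
    rw [hval] at htot
    exact htot
  -- dominated convergence
  have hmain : Tendsto (fun ρ => ∫ τ in a..x, g ρ τ) (nhdsWithin 0 (Set.Ioi (0 : ℝ)))
      (nhds (∫ τ in a..x, G τ)) := by
    apply intervalIntegral.tendsto_integral_filter_of_dominated_convergence
      (fun τ => K5 * ((x - τ) ^ (α - 1) + 1))
    · filter_upwards [self_mem_nhdsWithin] with ρ hρ
      have hρ0 : (0 : ℝ) < ρ := hρ
      rw [Set.uIoc_of_le hax.le, ← Measure.restrict_congr_set Ioo_ae_eq_Ioc]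
      apply ContinuousOn.aestronglyMeasurable _ measurableSet_Ioo
      apply ContinuousOn.mul _ (hf.mono fun τ hτ => ⟨hτ.1.le, hτ.2.le⟩)
      apply ContinuousOn.mul
      · exact continuousOn_id.rpow_const fun τ hτ => Or.inl (ne_of_gt (ha.trans hτ.1))
      · apply ContinuousOn.rpow_const
        · exact (continuousOn_const.sub
            (continuousOn_id.rpow_const fun τ hτ => Or.inr hρ0.le)).div_const ρ
        · intro τ hτ
          left
          have hτ0 : 0 < τ := ha.trans hτ.1
          have : τ ^ ρ < x ^ ρ := Real.rpow_lt_rpow hτ0.le hτ.2 hρ0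
          exact ne_of_gt (div_pos (by linarith) hρ0)
    · filter_upwards [Ioc_mem_nhdsGT zero_lt_one] with ρ hρ
      filter_upwards [hx_ae] with τ hτ hτmem
      rw [Set.uIoc_of_le hax.le] at hτmem
      exact hbnd ρ τ hρ.1 hρ.2 hτmem.1 (lt_of_le_of_ne hτmem.2 hτ)
    · apply IntervalIntegrable.const_mul
      apply IntervalIntegrable.add _ intervalIntegrable_const
      have h1 : IntervalIntegrable (fun t : ℝ => t ^ (α - 1)) volume 0 (x - a) :=
        intervalIntegral.intervalIntegrable_rpow' (by linarith)
      have h2 := (h1.comp_sub_left x).symm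
      simpa using h2
    · filter_upwards [hx_ae] with τ hτ hτmem
      rw [Set.uIoc_of_le hax.le] at hτmem
      exact hlim τ hτmem.1 (lt_of_le_of_ne hτmem.2 hτ)
  have hfinal := hmain.const_mul (1 / Real.Gamma α)
  apply hfinal.congr'
  filter_upwards [self_mem_nhdsWithin] with ρ hρ
  have hρ0 : 0 < ρ := hρ
  have hint_eq : ∫ τ in a..x, g ρ τ =
      ∫ τ in a..x, ρ ^ (1 - α) * (τ ^ (ρ - 1) * (x ^ ρ - τ ^ ρ) ^ (α - 1) * f τ) := by
    apply intervalIntegral.integral_congr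
    intro τ hτ
    rw [Set.uIcc_of_le hax.le] at hτ
    have hτ0 : 0 < τ := lt_of_lt_of_le ha hτ.1
    have hsub : 0 ≤ x ^ ρ - τ ^ ρ :=
      sub_nonneg.2 (Real.rpow_le_rpow hτ0.le hτ.2 hρ0.le)
    rw [hg]
    simp only []
    rw [Real.div_rpow hsub hρ0.le, show (1 : ℝ) - α = -(α - 1) by ring,
      Real.rpow_neg hρ0.le]
    ring
  rw [mul_comm ((1:ℝ) / Real.Gamma α) _, hint_eq, intervalIntegral.integral_const_mul]
  ring
end

section
/- Let 0 < α < 1, ρ > 0, a > 0, and let f be continuous on [a, b]. Then for every x with a < x < b, the generalized fractional derivative of the generalized fractional integral of f returns f, i.e. (ρD^α_{a+} (ρI^α_{a+} f))(x) = f(x). -/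
open MeasureTheory Filter Real

/-- The generalized (Katugampola) left-sided fractional integral of order `α`
with parameter `ρ` and base point `a`. -/
noncomputable def genFracIntegral (ρ α a : ℝ) (f : ℝ → ℝ) (x : ℝ) : ℝ :=
  (ρ ^ (1 - α) / Real.Gamma α) *
    ∫ τ in a..x, τ ^ (ρ - 1) * (x ^ ρ - τ ^ ρ) ^ (α - 1) * f τ

/-- The generalized (Katugampola) left-sided fractional derivative of order
`0 < α < 1` with parameter `ρ` and base point `a`:
`(ρD^α_{a+} f)(x) = x^{1-ρ} (d/dx)(ρI^{1-α}_{a+} f)(x)`. -/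
noncomputable def genFracDeriv (ρ α a : ℝ) (f : ℝ → ℝ) (x : ℝ) : ℝ :=
  x ^ (1 - ρ) * deriv (genFracIntegral ρ (1 - α) a f) x


section FracAux
set_option linter.unusedVariables false
open MeasureTheory Filter Real Set intervalIntegral

lemma beta01 {α : ℝ} (hα0 : 0 < α) (hα1 : α < 1) :
    ∫ t in (0:ℝ)..1, t ^ (α - 1) * (1 - t) ^ (-α) = Real.Gamma α * Real.Gamma (1 - α) := by
  have h1 : (0:ℝ) < 1 - α := by linarith
  have hc : Complex.Gamma α * Complex.Gamma (1 - (α:ℂ)) =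
      Complex.Gamma (α + (1 - α)) * Complex.betaIntegral α (1 - α) :=
    Complex.Gamma_mul_Gamma_eq_betaIntegral (by simpa using hα0) (by simp [Complex.sub_re]; simpa using h1)
  rw [show (α:ℂ) + (1 - α) = 1 by ring, Complex.Gamma_one, one_mul] at hc
  have hβ : Complex.betaIntegral α (1 - α) =
      ((∫ t in (0:ℝ)..1, t ^ (α - 1) * (1 - t) ^ (-α) : ℝ) : ℂ) := by
    rw [Complex.betaIntegral, ← intervalIntegral.integral_ofReal]
    refine intervalIntegral.integral_congr fun x hx => ?_
    rw [Set.uIcc_of_le (by norm_num : (0:ℝ) ≤ 1)] at hx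
    push_cast
    rw [show (α:ℂ) - 1 = ((α - 1 : ℝ) : ℂ) by push_cast; ring,
      show 1 - (α:ℂ) - 1 = ((-α : ℝ) : ℂ) by push_cast; ring,
      ← Complex.ofReal_one, ← Complex.ofReal_sub,
      ← Complex.ofReal_cpow hx.1, ← Complex.ofReal_cpow (by linarith [hx.2] : (0:ℝ) ≤ 1 - x)]
  have := hc
  rw [hβ, show (1 - (α:ℂ)) = ((1 - α : ℝ) : ℂ) by push_cast; ring, Complex.Gamma_ofReal,
    Complex.Gamma_ofReal, ← Complex.ofReal_mul] at this
  exact_mod_cast this.symm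

lemma betaInterval {α c d : ℝ} (hα0 : 0 < α) (hα1 : α < 1) (hcd : c < d) :
    ∫ u in c..d, (u - c) ^ (α - 1) * (d - u) ^ (-α) = Real.Gamma α * Real.Gamma (1 - α) := by
  set L := d - c with hL
  have hL0 : 0 < L := by simp [hL]; linarith
  set g : ℝ → ℝ := fun u => (u - c) ^ (α - 1) * (d - u) ^ (-α) with hg
  have h1 : ∫ x in (0:ℝ)..L, g (x + c) = ∫ u in c..d, g u := by
    simpa [hL] using intervalIntegral.integral_comp_add_right (a := 0) (b := L) g c
  have h2 : ∫ t in (0:ℝ)..1, g (L * t + c) = L⁻¹ • ∫ x in (0:ℝ)..L, g (x + c) := by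
    simpa using intervalIntegral.integral_comp_mul_left (a := 0) (b := 1)
      (fun x => g (x + c)) (ne_of_gt hL0)
  have h3 : ∫ t in (0:ℝ)..1, g (L * t + c)
      = L ^ (α - 1) * L ^ (-α) * ∫ t in (0:ℝ)..1, t ^ (α - 1) * (1 - t) ^ (-α) := by
    rw [← intervalIntegral.integral_const_mul]
    refine intervalIntegral.integral_congr fun t ht => ?_
    rw [Set.uIcc_of_le (by norm_num : (0:ℝ) ≤ 1)] at ht
    have h4 : L * t + c - c = L * t := by ring
    have h5 : d - (L * t + c) = L * (1 - t) := by rw [hL]; ring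
    rw [hg]
    simp only [h4, h5]
    rw [Real.mul_rpow hL0.le ht.1, Real.mul_rpow hL0.le (by linarith [ht.2])]
    ring
  have key : ∫ u in c..d, g u = L * (L ^ (α - 1) * L ^ (-α) *
      (Real.Gamma α * Real.Gamma (1 - α))) := by
    rw [← h1]
    have := h2.symm
    rw [h3, beta01 hα0 hα1] at this
    have h6 : L • (L⁻¹ • ∫ x in (0:ℝ)..L, g (x + c)) = ∫ x in (0:ℝ)..L, g (x + c) := by
      rw [smul_smul, mul_inv_cancel₀ (ne_of_gt hL0), one_smul]
    rw [← h6, this]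
    simp [smul_eq_mul]
  rw [show (∫ u in c..d, (u - c) ^ (α - 1) * (d - u) ^ (-α)) = ∫ u in c..d, g u from rfl, key,
    ← Real.rpow_add hL0]
  rw [show α - 1 + -α = -1 by ring, Real.rpow_neg_one]
  field_simp

section kernels
variable {ρ μ α c d : ℝ}

lemma rpow_lt_rpow_of_lt (hρ : 0 < ρ) {s t : ℝ} (hs : 0 ≤ s) (hst : s < t) :
    s ^ ρ < t ^ ρ := Real.rpow_lt_rpow hs hst hρ

/-- antiderivative for right-singular kernel -/
lemma hasDeriv_right (hρ : 0 < ρ) (hμ : μ ≠ 0) {s : ℝ} (hs0 : 0 < s) (hsd : s < d) :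
    HasDerivAt (fun s : ℝ => -(d ^ ρ - s ^ ρ) ^ μ / (μ * ρ))
      (s ^ (ρ - 1) * (d ^ ρ - s ^ ρ) ^ (μ - 1)) s := by
  have h1 : HasDerivAt (fun s : ℝ => s ^ ρ) (ρ * s ^ (ρ - 1)) s :=
    Real.hasDerivAt_rpow_const (Or.inl (ne_of_gt hs0))
  have h2 : HasDerivAt (fun s : ℝ => d ^ ρ - s ^ ρ) (-(ρ * s ^ (ρ - 1))) s := by
    have := (hasDerivAt_const s (d ^ ρ)).sub h1; rwa [zero_sub] at this
  have hne : d ^ ρ - s ^ ρ ≠ 0 :=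
    ne_of_gt (by linarith [rpow_lt_rpow_of_lt hρ hs0.le hsd])
  have h3 := h2.rpow_const (p := μ) (Or.inl hne)
  have h4 := (h3.neg).div_const (μ * ρ)
  refine h4.congr_deriv ?_
  rw [div_eq_iff (mul_ne_zero hμ hρ.ne')]
  ring

/-- antiderivative for left-singular kernel -/
lemma hasDeriv_left (hρ : 0 < ρ) (hμ : μ ≠ 0) {s : ℝ} (hs0 : 0 < s) (hcs : c < s)
    (hc0 : 0 ≤ c) :
    HasDerivAt (fun s : ℝ => (s ^ ρ - c ^ ρ) ^ μ / (μ * ρ))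
      (s ^ (ρ - 1) * (s ^ ρ - c ^ ρ) ^ (μ - 1)) s := by
  have h1 : HasDerivAt (fun s : ℝ => s ^ ρ) (ρ * s ^ (ρ - 1)) s :=
    Real.hasDerivAt_rpow_const (Or.inl (ne_of_gt hs0))
  have h2 : HasDerivAt (fun s : ℝ => s ^ ρ - c ^ ρ) (ρ * s ^ (ρ - 1)) s := by
    have := h1.sub (hasDerivAt_const s (c ^ ρ)); rwa [sub_zero] at this
  have hne : s ^ ρ - c ^ ρ ≠ 0 :=
    ne_of_gt (by linarith [rpow_lt_rpow_of_lt hρ hc0 hcs])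
  have h3 := (h2.rpow_const (p := μ) (Or.inl hne)).div_const (μ * ρ)
  refine h3.congr_deriv ?_
  rw [div_eq_iff (mul_ne_zero hμ hρ.ne')]
  ring

/-- continuity of antiderivatives -/
lemma contOn_right (hρ : 0 < ρ) (hμ : 0 ≤ μ) (hc : 0 < c) :
    ContinuousOn (fun s : ℝ => (d ^ ρ - s ^ ρ) ^ μ) (Set.Icc c d) := by
  apply ContinuousOn.rpow_const
  · exact (continuousOn_const.sub (ContinuousOn.rpow_const continuousOn_id
      (fun x hx => Or.inl (ne_of_gt (lt_of_lt_of_le hc hx.1)))))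
  · exact fun x _ => Or.inr hμ

lemma contOn_left (hρ : 0 < ρ) (hμ : 0 ≤ μ) (hc : 0 < c) :
    ContinuousOn (fun s : ℝ => (s ^ ρ - c ^ ρ) ^ μ) (Set.Icc c d) := by
  apply ContinuousOn.rpow_const
  · exact ((ContinuousOn.rpow_const continuousOn_id
      (fun x hx => Or.inl (ne_of_gt (lt_of_lt_of_le hc hx.1)))).sub continuousOn_const)
  · exact fun x _ => Or.inr hμ

lemma kernel_nonneg {s t : ℝ} (e1 e2 : ℝ) (hs : 0 ≤ s) (ht : 0 ≤ t) :
    0 ≤ s ^ e1 * t ^ e2 :=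
  mul_nonneg (Real.rpow_nonneg hs _) (Real.rpow_nonneg ht _)

/-- integrability of right-singular kernel -/
lemma intInt_right (hρ : 0 < ρ) (hμ : 0 < μ) (hc : 0 < c) (hcd : c < d) :
    IntervalIntegrable (fun s => s ^ (ρ - 1) * (d ^ ρ - s ^ ρ) ^ (μ - 1)) volume c d := by
  apply intervalIntegrable_deriv_of_nonneg (g := fun s : ℝ => -(d ^ ρ - s ^ ρ) ^ μ / (μ * ρ))
  · rw [Set.uIcc_of_le hcd.le]
    exact ((contOn_right hρ hμ.le hc).neg).div_const _
  · rw [min_eq_left hcd.le, max_eq_right hcd.le]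
    exact fun s hs => hasDeriv_right hρ (ne_of_gt hμ) (lt_trans hc hs.1) hs.2
  · rw [min_eq_left hcd.le, max_eq_right hcd.le]
    exact fun s hs => kernel_nonneg _ _ (le_of_lt (lt_trans hc hs.1))
      (by linarith [rpow_lt_rpow_of_lt hρ (le_of_lt (lt_trans hc hs.1)) hs.2])

/-- integrability of left-singular kernel -/
lemma intInt_left (hρ : 0 < ρ) (hμ : 0 < μ) (hc : 0 < c) (hcd : c < d) :
    IntervalIntegrable (fun s => s ^ (ρ - 1) * (s ^ ρ - c ^ ρ) ^ (μ - 1)) volume c d := by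
  apply intervalIntegrable_deriv_of_nonneg (g := fun s : ℝ => (s ^ ρ - c ^ ρ) ^ μ / (μ * ρ))
  · rw [Set.uIcc_of_le hcd.le]
    exact (contOn_left hρ hμ.le hc).div_const _
  · rw [min_eq_left hcd.le, max_eq_right hcd.le]
    exact fun s hs => hasDeriv_left hρ (ne_of_gt hμ) (lt_trans hc hs.1) hs.1 hc.le
  · rw [min_eq_left hcd.le, max_eq_right hcd.le]
    exact fun s hs => kernel_nonneg _ _ (le_of_lt (lt_trans hc hs.1))
      (by linarith [rpow_lt_rpow_of_lt hρ hc.le hs.1])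


lemma integral_right {ρ μ c d : ℝ} (hρ : 0 < ρ) (hμ : 0 < μ) (hc : 0 < c) (hcd : c < d) :
    ∫ s in c..d, s ^ (ρ - 1) * (d ^ ρ - s ^ ρ) ^ (μ - 1)
      = (d ^ ρ - c ^ ρ) ^ μ / (μ * ρ) := by
  rw [intervalIntegral.integral_eq_sub_of_hasDeriv_right_of_le hcd.le
    (((contOn_right hρ hμ.le hc).neg).div_const _)
    (fun s hs => (hasDeriv_right hρ (ne_of_gt hμ) (lt_trans hc hs.1) hs.2).hasDerivWithinAt)
    (intInt_right hρ hμ hc hcd)]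
  rw [Pi.neg_apply, Pi.neg_apply, sub_self, Real.zero_rpow (ne_of_gt hμ)]
  ring

end kernels

section mixed
variable {ρ α c d : ℝ}

lemma contOn_rpow_base {e : ℝ} {s : Set ℝ} (h : ∀ x ∈ s, (0:ℝ) < x) :
    ContinuousOn (fun x : ℝ => x ^ e) s :=
  ContinuousOn.rpow_const continuousOn_id (fun x hx => Or.inl (ne_of_gt (h x hx)))

lemma contOn_dmix {e : ℝ} {s : Set ℝ} (hρ : 0 < ρ)
    (h0 : ∀ x ∈ s, (0:ℝ) < x) (h : ∀ x ∈ s, x < d) :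
    ContinuousOn (fun x : ℝ => (d ^ ρ - x ^ ρ) ^ e) s := by
  apply ContinuousOn.rpow_const
  · exact continuousOn_const.sub (contOn_rpow_base h0)
  · exact fun x hx => Or.inl (ne_of_gt (by
      linarith [rpow_lt_rpow_of_lt hρ (h0 x hx).le (h x hx)]))

lemma contOn_cmix {e : ℝ} {s : Set ℝ} (hρ : 0 < ρ) (hc : 0 ≤ c)
    (h0 : ∀ x ∈ s, (0:ℝ) < x) (h : ∀ x ∈ s, c < x) :
    ContinuousOn (fun x : ℝ => (x ^ ρ - c ^ ρ) ^ e) s := by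
  apply ContinuousOn.rpow_const
  · exact (contOn_rpow_base h0).sub continuousOn_const
  · exact fun x hx => Or.inl (ne_of_gt (by
      linarith [rpow_lt_rpow_of_lt hρ hc (h x hx)]))

/-- integrability of the doubly singular kernel -/
lemma intInt_mixed (hρ : 0 < ρ) (hα0 : 0 < α) (hα1 : α < 1) (hc : 0 < c) (hcd : c < d) :
    IntervalIntegrable
      (fun s => s ^ (ρ - 1) * (d ^ ρ - s ^ ρ) ^ (-α) * (s ^ ρ - c ^ ρ) ^ (α - 1))
      volume c d := by
  set m := (c + d) / 2 with hm
  have hcm : c < m := by rw [hm]; linarith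
  have hmd : m < d := by rw [hm]; linarith
  have hm0 : 0 < m := lt_trans hc hcm
  have part1 : IntervalIntegrable
      (fun s => s ^ (ρ - 1) * (d ^ ρ - s ^ ρ) ^ (-α) * (s ^ ρ - c ^ ρ) ^ (α - 1))
      volume c m := by
    have base := (intInt_left hρ hα0 hc hcm).mul_continuousOn
      (g := fun s : ℝ => (d ^ ρ - s ^ ρ) ^ (-α)) (by
        rw [Set.uIcc_of_le hcm.le]
        exact contOn_dmix hρ (fun x hx => lt_of_lt_of_le hc hx.1)
          (fun x hx => lt_of_le_of_lt hx.2 hmd))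
    have : (fun s : ℝ => s ^ (ρ - 1) * (s ^ ρ - c ^ ρ) ^ (α - 1) * (d ^ ρ - s ^ ρ) ^ (-α))
        = fun s => s ^ (ρ - 1) * (d ^ ρ - s ^ ρ) ^ (-α) * (s ^ ρ - c ^ ρ) ^ (α - 1) := by
      funext s; ring
    rwa [this] at base
  have part2 : IntervalIntegrable
      (fun s => s ^ (ρ - 1) * (d ^ ρ - s ^ ρ) ^ (-α) * (s ^ ρ - c ^ ρ) ^ (α - 1))
      volume m d := by
    have h1 := intInt_right (μ := 1 - α) hρ (by linarith) hm0 hmd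
    rw [show (1 : ℝ) - α - 1 = -α by ring] at h1
    exact h1.mul_continuousOn (by
      rw [Set.uIcc_of_le hmd.le]
      exact contOn_cmix hρ hc.le (fun x hx => lt_of_lt_of_le hm0 hx.1)
        (fun x hx => lt_of_lt_of_le hcm hx.1))
  exact part1.trans part2

/-- value of the doubly singular kernel integral -/
lemma integral_mixed (hρ : 0 < ρ) (hα0 : 0 < α) (hα1 : α < 1) (hc : 0 < c) (hcd : c < d) :
    ∫ s in c..d, s ^ (ρ - 1) * (d ^ ρ - s ^ ρ) ^ (-α) * (s ^ ρ - c ^ ρ) ^ (α - 1)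
      = Real.Gamma α * Real.Gamma (1 - α) / ρ := by
  have hc' : (0:ℝ) < c ^ ρ := Real.rpow_pos_of_pos hc _
  have hcd' : c ^ ρ < d ^ ρ := rpow_lt_rpow_of_lt hρ hc.le hcd
  set g : ℝ → ℝ := fun u => (u - c ^ ρ) ^ (α - 1) * (d ^ ρ - u) ^ (-α) with hgdef
  -- interval integrability of g on c^ρ..d^ρ (the ρ = 1 case of intInt_mixed)
  have hgint : IntervalIntegrable g volume (c ^ ρ) (d ^ ρ) := by
    have h1 := intInt_mixed (ρ := 1) one_pos hα0 hα1 hc' hcd'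
    have : (fun s : ℝ => s ^ ((1:ℝ) - 1) * ((d ^ ρ) ^ (1:ℝ) - s ^ (1:ℝ)) ^ (-α)
        * (s ^ (1:ℝ) - (c ^ ρ) ^ (1:ℝ)) ^ (α - 1)) = g := by
      funext s
      rw [hgdef]
      simp [Real.rpow_one, Real.rpow_zero]
      ring
    rwa [this] at h1
  have himage1 : ∀ x ∈ Set.Ioo c d, (fun s : ℝ => s ^ ρ) x ∈ Set.Ioo (c ^ ρ) (d ^ ρ) :=
    fun x hx => ⟨rpow_lt_rpow_of_lt hρ hc.le hx.1,
      rpow_lt_rpow_of_lt hρ (lt_trans hc hx.1).le hx.2⟩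
  have himage2 : ∀ x ∈ Set.Icc c d, (fun s : ℝ => s ^ ρ) x ∈ Set.Icc (c ^ ρ) (d ^ ρ) :=
    fun x hx => ⟨Real.rpow_le_rpow hc.le hx.1 hρ.le,
      Real.rpow_le_rpow (lt_of_lt_of_le hc hx.1).le hx.2 hρ.le⟩
  have key := intervalIntegral.integral_comp_smul_deriv''' (a := c) (b := d)
    (f := fun s : ℝ => s ^ ρ) (f' := fun s : ℝ => ρ * s ^ (ρ - 1)) (g := g)
    (contOn_rpow_base (by rw [Set.uIcc_of_le hcd.le]; exact fun x hx => lt_of_lt_of_le hc hx.1))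
    ?deriv ?gcont ?gint1 ?gint2
  case deriv =>
    rw [min_eq_left hcd.le, max_eq_right hcd.le]
    exact fun x hx => (Real.hasDerivAt_rpow_const
      (Or.inl (ne_of_gt (lt_trans hc hx.1)))).hasDerivWithinAt
  case gcont =>
    rw [min_eq_left hcd.le, max_eq_right hcd.le]
    have hsub : ((fun s : ℝ => s ^ ρ) '' Set.Ioo c d) ⊆ Set.Ioo (c ^ ρ) (d ^ ρ) := by
      rintro _ ⟨x, hx, rfl⟩; exact himage1 x hx
    refine ContinuousOn.mono ?_ hsub
    apply ContinuousOn.mul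
    · exact ContinuousOn.rpow_const (continuousOn_id.sub continuousOn_const)
        (fun u hu => Or.inl (ne_of_gt (by linarith [hu.1])))
    · exact ContinuousOn.rpow_const (continuousOn_const.sub continuousOn_id)
        (fun u hu => Or.inl (ne_of_gt (by linarith [hu.2])))
  case gint1 =>
    have hsub : (fun s : ℝ => s ^ ρ) '' (Set.uIcc c d) ⊆ Set.Icc (c ^ ρ) (d ^ ρ) := by
      rw [Set.uIcc_of_le hcd.le]
      rintro _ ⟨x, hx, rfl⟩
      exact himage2 x hx
    exact ((intervalIntegrable_iff_integrableOn_Icc_of_le hcd'.le).mp hgint).mono_set hsub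
  case gint2 =>
    rw [Set.uIcc_of_le hcd.le, ← intervalIntegrable_iff_integrableOn_Icc_of_le hcd.le]
    have h1 := (intInt_mixed hρ hα0 hα1 hc hcd).const_mul ρ
    have : (fun s : ℝ => ρ * (s ^ (ρ - 1) * (d ^ ρ - s ^ ρ) ^ (-α) * (s ^ ρ - c ^ ρ) ^ (α - 1)))
        = fun x => (ρ * x ^ (ρ - 1)) • (g ∘ fun s : ℝ => s ^ ρ) x := by
      funext s
      simp only [hgdef, Function.comp, smul_eq_mul]
      ring
    rwa [this] at h1
  -- key : ∫ x in c..d, (ρ * x^(ρ-1)) • g (x^ρ) = ∫ u in c^ρ..d^ρ, g u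
  have hbeta : ∫ u in c ^ ρ..d ^ ρ, g u = Real.Gamma α * Real.Gamma (1 - α) :=
    betaInterval hα0 hα1 hcd'
  have hL : ∫ x in c..d, (ρ * x ^ (ρ - 1)) • (g ∘ fun s : ℝ => s ^ ρ) x
      = ρ * ∫ s in c..d, s ^ (ρ - 1) * (d ^ ρ - s ^ ρ) ^ (-α) * (s ^ ρ - c ^ ρ) ^ (α - 1) := by
    rw [← intervalIntegral.integral_const_mul]
    refine intervalIntegral.integral_congr fun s _ => ?_
    simp only [hgdef, Function.comp, smul_eq_mul]
    ring
  rw [hL, hbeta] at key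
  field_simp [ne_of_gt hρ] at key ⊢
  linarith [key]

end mixed

lemma measurable_rpow_const (c : ℝ) : Measurable fun x : ℝ => x ^ c := by
  have heq : (fun x : ℝ => x ^ c) = fun x =>
      if x = 0 then (if c = 0 then 1 else 0)
      else if x < 0 then Real.exp (Real.log x * c) * Real.cos (c * π)
      else Real.exp (Real.log x * c) := by
    funext x
    rcases lt_trichotomy x 0 with h | h | h
    · rw [if_neg (ne_of_lt h), if_pos h, Real.rpow_def_of_neg h]
    · subst h; rw [if_pos rfl]
      rcases eq_or_ne c 0 with rfl | hc
      · simp [Real.rpow_zero]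
      · simp [Real.zero_rpow hc, hc]
    · rw [if_neg (ne_of_gt h), if_neg (not_lt.mpr h.le), Real.rpow_def_of_pos h]
  rw [heq]
  refine Measurable.ite (MeasurableSet.singleton 0 : MeasurableSet {x : ℝ | x = 0})
    measurable_const ?_
  exact Measurable.ite measurableSet_Iio
    ((Real.measurable_exp.comp (Real.measurable_log.mul measurable_const)).mul measurable_const)
    (Real.measurable_exp.comp (Real.measurable_log.mul measurable_const))


section fubini
variable {ρ α a y : ℝ}

lemma swapKey (hρ : 0 < ρ) (hα0 : 0 < α) (hα1 : α < 1) (ha : 0 < a) (hay : a < y)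
    (f : ℝ → ℝ) (hf : Continuous f) :
    ∫ s in a..y, (s ^ (ρ - 1) * (y ^ ρ - s ^ ρ) ^ (-α)) *
        ∫ τ in a..s, τ ^ (ρ - 1) * (s ^ ρ - τ ^ ρ) ^ (α - 1) * f τ
      = (Real.Gamma α * Real.Gamma (1 - α) / ρ) * ∫ τ in a..y, τ ^ (ρ - 1) * f τ := by
  obtain ⟨M, hM⟩ := (isCompact_Icc : IsCompact (Set.Icc a y)).exists_bound_of_continuousOn
    hf.continuousOn
  have hM0 : 0 ≤ M := le_trans (norm_nonneg (f a)) (hM a ⟨le_refl a, hay.le⟩)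
  set μ : Measure ℝ := volume.restrict (Set.Ioc a y) with hμdef
  set g₀ : ℝ → ℝ := fun s => s ^ (ρ - 1) * (y ^ ρ - s ^ ρ) ^ (-α) with hg₀def
  set k : ℝ → ℝ → ℝ := fun s τ => τ ^ (ρ - 1) * (s ^ ρ - τ ^ ρ) ^ (α - 1) with hkdef
  set W : ℝ → ℝ → ℝ := fun s τ =>
    if a < τ ∧ τ < s then g₀ s * (k s τ * f τ) else 0 with hWdef
  have hg₀nn : ∀ s ∈ Set.Ioc a y, 0 ≤ g₀ s := fun s hs =>
    mul_nonneg (Real.rpow_nonneg (le_of_lt (lt_trans ha hs.1)) _)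
      (Real.rpow_nonneg (by
        rcases eq_or_lt_of_le hs.2 with h | h
        · simp [h]
        · linarith [rpow_lt_rpow_of_lt hρ (le_of_lt (lt_trans ha hs.1)) h]) _)
  have hknn : ∀ s, ∀ τ ∈ Set.Ioo a s, 0 ≤ k s τ := fun s τ hτ =>
    mul_nonneg (Real.rpow_nonneg (le_of_lt (lt_trans ha hτ.1)) _)
      (Real.rpow_nonneg (by
        linarith [rpow_lt_rpow_of_lt hρ (le_of_lt (lt_trans ha hτ.1)) hτ.2]) _)
  have hWind : ∀ s : ℝ, W s = Set.indicator (Set.Ioo a s)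
      (fun τ => g₀ s * (k s τ * f τ)) := by
    intro s; funext τ
    rw [hWdef]
    simp only [Set.indicator_apply, Set.mem_Ioo]
  have hsub : ∀ s ∈ Set.Ioc a y, Set.Ioo a s ∩ Set.Ioc a y = Set.Ioo a s := by
    intro s hs
    refine Set.inter_eq_left.mpr fun τ hτ => ⟨hτ.1, le_trans hτ.2.le hs.2⟩
  -- measurability
  have hWmeas : AEStronglyMeasurable (Function.uncurry W) (μ.prod μ) := by
    have : Function.uncurry W = fun p : ℝ × ℝ =>
        if a < p.2 ∧ p.2 < p.1 then g₀ p.1 * (k p.1 p.2 * f p.2) else 0 := rfl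
    rw [this]
    apply Measurable.aestronglyMeasurable
    have hset : MeasurableSet {p : ℝ × ℝ | a < p.2 ∧ p.2 < p.1} := by
      have : {p : ℝ × ℝ | a < p.2 ∧ p.2 < p.1}
          = {p : ℝ × ℝ | a < p.2} ∩ {p : ℝ × ℝ | p.2 < p.1} := rfl
      rw [this]
      exact (measurableSet_lt measurable_const measurable_snd).inter
        (measurableSet_lt measurable_snd measurable_fst)
    refine Measurable.ite hset ?_ measurable_const
    have hg₀m : Measurable fun p : ℝ × ℝ => g₀ p.1 :=
      ((measurable_rpow_const _).comp measurable_fst).mul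
        ((measurable_rpow_const _).comp
          (measurable_const.sub ((measurable_rpow_const ρ).comp measurable_fst)))
    have hkm : Measurable fun p : ℝ × ℝ => k p.1 p.2 :=
      ((measurable_rpow_const _).comp measurable_snd).mul
        ((measurable_rpow_const _).comp
          (((measurable_rpow_const ρ).comp measurable_fst).sub
            ((measurable_rpow_const ρ).comp measurable_snd)))
    exact hg₀m.mul (hkm.mul (hf.measurable.comp measurable_snd))
  -- integrability of slices
  have hkern : ∀ s ∈ Set.Ioc a y, IntegrableOn (fun τ => k s τ * f τ) (Set.Ioo a s) volume := by
    intro s hs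
    have h1 := (intInt_right (μ := α) (d := s) hρ hα0 ha hs.1).mul_continuousOn
      (g := f) hf.continuousOn
    exact ((intervalIntegrable_iff_integrableOn_Ioc_of_le hs.1.le).mp h1).mono_set
      Set.Ioo_subset_Ioc_self
  have hkern0 : ∀ s ∈ Set.Ioc a y, IntegrableOn (fun τ => k s τ) (Set.Ioo a s) volume := by
    intro s hs
    exact ((intervalIntegrable_iff_integrableOn_Ioc_of_le hs.1.le).mp
      (intInt_right (μ := α) (d := s) hρ hα0 ha hs.1)).mono_set Set.Ioo_subset_Ioc_self
  have hWslice : ∀ s ∈ Set.Ioc a y, Integrable (W s) μ := by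
    intro s hs
    rw [hWind s, hμdef, integrable_indicator_iff measurableSet_Ioo, IntegrableOn,
      Measure.restrict_restrict measurableSet_Ioo, hsub s hs]
    exact (hkern s hs).const_mul _
  -- the uniform bound on τ-integrals of norms
  set K0 : ℝ := M * ((y ^ ρ - a ^ ρ) ^ α / (α * ρ)) with hK0def
  have hbnd : Integrable (fun s => K0 * g₀ s) μ := by
    have h1 := intInt_right (μ := 1 - α) (d := y) hρ (by linarith) ha hay
    rw [show (1 : ℝ) - α - 1 = -α by ring] at h1
    exact (intervalIntegrable_iff_integrableOn_Ioc_of_le hay.le).mp (h1.const_mul K0)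
  have hest : ∀ s ∈ Set.Ioc a y, (∫ τ, ‖W s τ‖ ∂μ) ≤ K0 * g₀ s := by
    intro s hs
    have hs0 : 0 < s := lt_trans ha hs.1
    have hnorm : (fun τ => ‖W s τ‖) = Set.indicator (Set.Ioo a s)
        (fun τ => ‖g₀ s * (k s τ * f τ)‖) := by
      funext τ
      rw [hWind s, norm_indicator_eq_indicator_norm]
    rw [hnorm, hμdef, MeasureTheory.integral_indicator measurableSet_Ioo,
      Measure.restrict_restrict measurableSet_Ioo, hsub s hs]
    have step1 : (∫ τ in Set.Ioo a s, ‖g₀ s * (k s τ * f τ)‖)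
        ≤ ∫ τ in Set.Ioo a s, g₀ s * k s τ * M := by
      apply setIntegral_mono_on
      · exact (((hkern s hs).const_mul _).norm)
      · exact (((hkern0 s hs).const_mul (g₀ s)).mul_const M)
      · exact measurableSet_Ioo
      · intro τ hτ
        have hfτ : ‖f τ‖ ≤ M := hM τ ⟨hτ.1.le, le_trans hτ.2.le hs.2⟩
        have hynn : (0:ℝ) ≤ y ^ ρ - s ^ ρ := by
          rcases eq_or_lt_of_le hs.2 with h | h
          · simp [h]
          · linarith [rpow_lt_rpow_of_lt hρ hs0.le h]
        have hsτ : (0:ℝ) ≤ s ^ ρ - τ ^ ρ := by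
          linarith [rpow_lt_rpow_of_lt hρ (le_of_lt (lt_trans ha hτ.1)) hτ.2]
        calc ‖g₀ s * (k s τ * f τ)‖ = g₀ s * (k s τ * ‖f τ‖) := by
              simp only [hg₀def, hkdef, norm_mul, Real.norm_eq_abs]
              rw [abs_of_nonneg (Real.rpow_nonneg hs0.le (ρ - 1)),
                abs_of_nonneg (Real.rpow_nonneg hynn (-α)),
                abs_of_nonneg (Real.rpow_nonneg (le_of_lt (lt_trans ha hτ.1)) (ρ - 1)),
                abs_of_nonneg (Real.rpow_nonneg hsτ (α - 1))]
          _ ≤ g₀ s * (k s τ * M) := by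
              refine mul_le_mul_of_nonneg_left ?_ (hg₀nn s hs)
              exact mul_le_mul_of_nonneg_left hfτ (hknn s τ hτ)
          _ = g₀ s * k s τ * M := by ring
    have step2 : (∫ τ in Set.Ioo a s, g₀ s * k s τ * M)
        = g₀ s * M * ((s ^ ρ - a ^ ρ) ^ α / (α * ρ)) := by
      have : (∫ τ in Set.Ioo a s, g₀ s * k s τ * M)
          = g₀ s * M * ∫ τ in Set.Ioo a s, k s τ := by
        rw [← MeasureTheory.integral_const_mul]
        congr 1
        funext τ
        ring
      rw [this, ← MeasureTheory.integral_Ioc_eq_integral_Ioo,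
        ← intervalIntegral.integral_of_le hs.1.le]
      simp only [hkdef]
      rw [integral_right hρ hα0 ha hs.1]
    have step3 : g₀ s * M * ((s ^ ρ - a ^ ρ) ^ α / (α * ρ)) ≤ K0 * g₀ s := by
      rw [hK0def]
      have h1 : (s ^ ρ - a ^ ρ) ^ α ≤ (y ^ ρ - a ^ ρ) ^ α := by
        apply Real.rpow_le_rpow
        · rcases eq_or_lt_of_le hs.1.le with h | h
          · simp [← h]
          · linarith [rpow_lt_rpow_of_lt hρ ha.le h]
        · have : s ^ ρ ≤ y ^ ρ := by
            rcases eq_or_lt_of_le hs.2 with h | h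
            · simp [h]
            · exact (rpow_lt_rpow_of_lt hρ hs0.le h).le
          linarith
        · exact hα0.le
      have h2 : 0 ≤ g₀ s * M := mul_nonneg (hg₀nn s hs) hM0
      calc g₀ s * M * ((s ^ ρ - a ^ ρ) ^ α / (α * ρ))
          ≤ g₀ s * M * ((y ^ ρ - a ^ ρ) ^ α / (α * ρ)) := by
            refine mul_le_mul_of_nonneg_left ?_ h2
            exact div_le_div_of_nonneg_right h1 (by positivity)
          _ = M * ((y ^ ρ - a ^ ρ) ^ α / (α * ρ)) * g₀ s := by ring
    linarith [step1, step2 ▸ step3]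
  -- product integrability and Fubini
  have haeslice : ∀ᵐ s ∂μ, Integrable (fun τ => Function.uncurry W (s, τ)) μ := by
    filter_upwards [ae_restrict_mem measurableSet_Ioc] with s hs
    exact hWslice s hs
  have hthird : Integrable (fun s => ∫ τ, ‖Function.uncurry W (s, τ)‖ ∂μ) μ := by
    apply Integrable.mono' hbnd (hWmeas.norm.integral_prod_right')
    filter_upwards [ae_restrict_mem measurableSet_Ioc] with s hs
    rw [Real.norm_eq_abs, abs_of_nonneg (integral_nonneg fun τ => norm_nonneg _)]
    exact hest s hs
  have hint : Integrable (Function.uncurry W) (μ.prod μ) :=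
    (integrable_prod_iff hWmeas).mpr ⟨haeslice, hthird⟩
  have hswap := MeasureTheory.integral_integral_swap (f := W) hint
  -- identify the two iterated integrals
  have hLHS : (∫ s, ∫ τ, W s τ ∂μ ∂μ)
      = ∫ s in a..y, g₀ s * ∫ τ in a..s, k s τ * f τ := by
    rw [intervalIntegral.integral_of_le hay.le]
    apply setIntegral_congr_fun measurableSet_Ioc
    intro s hs
    dsimp only
    rw [hWind s, hμdef, MeasureTheory.integral_indicator measurableSet_Ioo,
      Measure.restrict_restrict measurableSet_Ioo, hsub s hs,
      intervalIntegral.integral_of_le hs.1.le, MeasureTheory.integral_Ioc_eq_integral_Ioo,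
      MeasureTheory.integral_const_mul]
  have hRHS : (∫ τ, ∫ s, W s τ ∂μ ∂μ)
      = (Real.Gamma α * Real.Gamma (1 - α) / ρ) * ∫ τ in a..y, τ ^ (ρ - 1) * f τ := by
    rw [intervalIntegral.integral_of_le hay.le, ← MeasureTheory.integral_const_mul]
    show (∫ τ in Set.Ioc a y, (∫ s, W s τ ∂μ) ∂volume) = _
    rw [MeasureTheory.integral_Ioc_eq_integral_Ioo,
      MeasureTheory.integral_Ioc_eq_integral_Ioo]
    apply setIntegral_congr_fun measurableSet_Ioo
    intro τ hτ
    dsimp only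
    have hτ0 : 0 < τ := lt_trans ha hτ.1
    have hind : (fun s => W s τ) = Set.indicator (Set.Ioi τ)
        (fun s => (τ ^ (ρ - 1) * f τ) *
          (s ^ (ρ - 1) * (y ^ ρ - s ^ ρ) ^ (-α) * (s ^ ρ - τ ^ ρ) ^ (α - 1))) := by
      funext s
      rw [hWdef]
      dsimp only
      by_cases h : τ < s
      · rw [if_pos ⟨hτ.1, h⟩, Set.indicator_of_mem (Set.mem_Ioi.mpr h)]
        simp only [hg₀def, hkdef]
        ring
      · rw [if_neg (fun hc => h hc.2), Set.indicator_of_notMem (by simpa using h)]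
    rw [hind, hμdef, MeasureTheory.integral_indicator measurableSet_Ioi,
      Measure.restrict_restrict measurableSet_Ioi]
    have hIoc : Set.Ioi τ ∩ Set.Ioc a y = Set.Ioc τ y := by
      ext s
      simp only [Set.mem_inter_iff, Set.mem_Ioi, Set.mem_Ioc]
      constructor
      · rintro ⟨h1, _, h3⟩; exact ⟨h1, h3⟩
      · rintro ⟨h1, h2⟩; exact ⟨h1, lt_trans hτ.1 h1, h2⟩
    rw [hIoc, MeasureTheory.integral_const_mul, ← intervalIntegral.integral_of_le hτ.2.le,
      integral_mixed hρ hα0 hα1 hτ0 hτ.2]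
    ring
  exact hLHS.symm.trans (hswap.trans hRHS)

end fubini

theorem key_cont (α ρ a b : ℝ) (hα0 : 0 < α) (hα1 : α < 1)
    (hρ : 0 < ρ) (ha : 0 < a) (f : ℝ → ℝ) (hf : Continuous f) :
    ∀ x : ℝ, a < x → x < b →
      genFracDeriv ρ α a (genFracIntegral ρ α a f) x = f x := by
  intro x hax hxb
  have hx0 : 0 < x := lt_trans ha hax
  have hΓα : 0 < Real.Gamma α := Real.Gamma_pos_of_pos hα0
  have hΓα' : 0 < Real.Gamma (1 - α) := Real.Gamma_pos_of_pos (by linarith)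
  -- Step 1: on a neighborhood of x the composite equals the primitive of τ^(ρ-1) f τ
  have hev : genFracIntegral ρ (1 - α) a (genFracIntegral ρ α a f)
      =ᶠ[nhds x] fun y => ∫ τ in a..y, τ ^ (ρ - 1) * f τ := by
    filter_upwards [Ioo_mem_nhds hax hxb] with y hy
    show genFracIntegral ρ (1 - α) a (genFracIntegral ρ α a f) y
      = ∫ τ in a..y, τ ^ (ρ - 1) * f τ
    rw [genFracIntegral]
    have h1 : (∫ s in a..y, s ^ (ρ - 1) * (y ^ ρ - s ^ ρ) ^ (1 - α - 1) *
        genFracIntegral ρ α a f s)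
        = (ρ ^ (1 - α) / Real.Gamma α) * ∫ s in a..y,
          (s ^ (ρ - 1) * (y ^ ρ - s ^ ρ) ^ (-α)) *
            ∫ τ in a..s, τ ^ (ρ - 1) * (s ^ ρ - τ ^ ρ) ^ (α - 1) * f τ := by
      rw [← intervalIntegral.integral_const_mul]
      refine intervalIntegral.integral_congr fun s _ => ?_
      rw [genFracIntegral, show (1:ℝ) - α - 1 = -α by ring]
      ring
    rw [h1, swapKey hρ hα0 hα1 ha hy.1 f hf]
    have hc : ρ ^ (1 - (1 - α)) / Real.Gamma (1 - α) * (ρ ^ (1 - α) / Real.Gamma α *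
        (Real.Gamma α * Real.Gamma (1 - α) / ρ)) = 1 := by
      rw [show (1:ℝ) - (1 - α) = α by ring]
      have hρρ : ρ ^ α * ρ ^ (1 - α) = ρ := by
        rw [← Real.rpow_add hρ, show α + (1 - α) = (1:ℝ) by ring, Real.rpow_one]
      field_simp
      linear_combination hρρ
    calc ρ ^ (1 - (1 - α)) / Real.Gamma (1 - α) * (ρ ^ (1 - α) / Real.Gamma α *
          (Real.Gamma α * Real.Gamma (1 - α) / ρ * ∫ τ in a..y, τ ^ (ρ - 1) * f τ))
        = (ρ ^ (1 - (1 - α)) / Real.Gamma (1 - α) * (ρ ^ (1 - α) / Real.Gamma α *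
          (Real.Gamma α * Real.Gamma (1 - α) / ρ))) * ∫ τ in a..y, τ ^ (ρ - 1) * f τ := by
          ring
      _ = ∫ τ in a..y, τ ^ (ρ - 1) * f τ := by rw [hc, one_mul]
  -- Step 2: differentiate
  have hii : IntervalIntegrable (fun τ => τ ^ (ρ - 1) * f τ) volume a x := by
    apply ContinuousOn.intervalIntegrable
    apply ContinuousOn.mul _ hf.continuousOn
    exact ContinuousOn.rpow_const continuousOn_id fun t ht => Or.inl (by
      rw [Set.uIcc_of_le hax.le] at ht
      exact ne_of_gt (lt_of_lt_of_le ha ht.1))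
  have hmeas : StronglyMeasurableAtFilter (fun τ : ℝ => τ ^ (ρ - 1) * f τ) (nhds x) :=
    ((measurable_rpow_const (ρ - 1)).mul hf.measurable).stronglyMeasurable.stronglyMeasurableAtFilter
  have hca : ContinuousAt (fun τ : ℝ => τ ^ (ρ - 1) * f τ) x :=
    (Real.continuousAt_rpow_const x (ρ - 1) (Or.inl (ne_of_gt hx0))).mul hf.continuousAt
  have hFTC := intervalIntegral.integral_hasDerivAt_right hii hmeas hca
  have hderiv : deriv (genFracIntegral ρ (1 - α) a (genFracIntegral ρ α a f)) x
      = x ^ (ρ - 1) * f x := by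
    rw [EventuallyEq.deriv_eq hev]
    exact hFTC.deriv
  rw [genFracDeriv, hderiv, ← mul_assoc, ← Real.rpow_add hx0,
    show (1 - ρ) + (ρ - 1) = (0:ℝ) by ring, Real.rpow_zero, one_mul]


end FracAux

/-- For `0 < α < 1`, `ρ > 0`, `a > 0` and `f` continuous on `[a, b]`,
the generalized fractional derivative of the generalized fractional integral of `f`
returns `f` at every `x` with `a < x < b`. -/
theorem genFracDeriv_genFracIntegral (α ρ a b : ℝ) (hα0 : 0 < α) (hα1 : α < 1)
    (hρ : 0 < ρ) (ha : 0 < a) (f : ℝ → ℝ) (hf : ContinuousOn f (Set.Icc a b)) :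
    ∀ x : ℝ, a < x → x < b →
      genFracDeriv ρ α a (genFracIntegral ρ α a f) x = f x := by
  intro x hax hxb
  have hab : a ≤ b := (lt_trans hax hxb).le
  set F : ℝ → ℝ := Set.IccExtend hab ((Set.Icc a b).restrict f) with hFdef
  have hFcont : Continuous F :=
    continuous_IccExtend_iff.mpr (continuousOn_iff_continuous_restrict.mp hf)
  have hFeq : ∀ t ∈ Set.Icc a b, F t = f t := fun t ht => by
    rw [hFdef, Set.IccExtend_of_mem hab _ ht]; rfl
  have hkey := key_cont α ρ a b hα0 hα1 hρ ha F hFcont x hax hxb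
  -- transfer from F to f
  have hIeq : ∀ y ∈ Set.Icc a b, genFracIntegral ρ α a F y = genFracIntegral ρ α a f y := by
    intro y hy
    rw [genFracIntegral, genFracIntegral]
    congr 1
    refine intervalIntegral.integral_congr fun τ hτ => ?_
    rw [Set.uIcc_of_le hy.1] at hτ
    rw [hFeq τ ⟨hτ.1, le_trans hτ.2 hy.2⟩]
  have hev2 : genFracIntegral ρ (1 - α) a (genFracIntegral ρ α a F)
      =ᶠ[nhds x] genFracIntegral ρ (1 - α) a (genFracIntegral ρ α a f) := by
    filter_upwards [Ioo_mem_nhds hax hxb] with y hy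
    show genFracIntegral ρ (1 - α) a (genFracIntegral ρ α a F) y
      = genFracIntegral ρ (1 - α) a (genFracIntegral ρ α a f) y
    rw [genFracIntegral, genFracIntegral]
    congr 1
    refine intervalIntegral.integral_congr fun s hs => ?_
    rw [Set.uIcc_of_le hy.1.le] at hs
    rw [hIeq s ⟨hs.1, le_trans hs.2 hy.2.le⟩]
  rw [genFracDeriv, ← EventuallyEq.deriv_eq hev2, ← genFracDeriv, hkey,
    hFeq x ⟨hax.le, hxb.le⟩]
end

section
/- Let α, β be real with 0 < α < β < 1, let 0 < a < b < ∞, ρ > 0, and let f be continuous on [a, b]. Then for every x with a < x < b, (ρD^α_{a+} (ρI^β_{a+} f))(x) = (ρI^{β-α}_{a+} f)(x); that is, the generalized fractional derivative of order α of the generalized fractional integral of order β of f equals the generalized fractional integral of order β - α of f. -/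
open MeasureTheory Filter Real Topology

noncomputable def gAux (f : ℝ → ℝ) (ρ : ℝ) : ℝ → ℝ := fun u => f (|u| ^ ρ⁻¹)

lemma realBeta {u v : ℝ} (hu : 0 < u) (hv : 0 < v) :
    ∫ t in (0:ℝ)..1, t ^ (u-1) * (1-t) ^ (v-1) = Real.Gamma u * Real.Gamma v / Real.Gamma (u+v) := by
  have h := Complex.Gamma_mul_Gamma_eq_betaIntegral (s := (u:ℂ)) (t := (v:ℂ))
    (by simpa using hu) (by simpa using hv)
  have hint : Complex.betaIntegral u v
      = ((∫ t in (0:ℝ)..1, t ^ (u-1) * (1-t) ^ (v-1) : ℝ) : ℂ) := by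
    rw [Complex.betaIntegral, ← intervalIntegral.integral_ofReal]
    apply intervalIntegral.integral_congr
    intro t ht
    rw [Set.uIcc_of_le (by norm_num : (0:ℝ) ≤ 1)] at ht
    show (t:ℂ) ^ ((u:ℂ) - 1) * (1 - (t:ℂ)) ^ ((v:ℂ) - 1) = ((t ^ (u - 1) * (1 - t) ^ (v - 1) : ℝ) : ℂ)
    rw [Complex.ofReal_mul, Complex.ofReal_cpow ht.1,
      Complex.ofReal_cpow (by linarith [ht.2] : (0:ℝ) ≤ 1 - t)]
    push_cast
    ring
  rw [hint, ← Complex.ofReal_add, Complex.Gamma_ofReal, Complex.Gamma_ofReal,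
    Complex.Gamma_ofReal] at h
  have h' : Real.Gamma u * Real.Gamma v
      = Real.Gamma (u+v) * ∫ t in (0:ℝ)..1, t ^ (u-1) * (1-t) ^ (v-1) := by
    exact_mod_cast h
  have hne : Real.Gamma (u+v) ≠ 0 := (Real.Gamma_pos_of_pos (by linarith)).ne'
  field_simp [hne] at h' ⊢
  linarith [h']


lemma rpow_image {ρ : ℝ} (hρ : 0 < ρ) {a x : ℝ} (ha : 0 < a) (hax : a ≤ x) :
    (fun τ : ℝ => τ ^ ρ) '' Set.Ioo a x = Set.Ioo (a ^ ρ) (x ^ ρ) := by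
  ext u
  constructor
  · rintro ⟨τ, ⟨h1, h2⟩, rfl⟩
    exact ⟨Real.rpow_lt_rpow ha.le h1 hρ, Real.rpow_lt_rpow (ha.trans h1).le h2 hρ⟩
  · rintro ⟨h1, h2⟩
    have hu : 0 < u := (Real.rpow_pos_of_pos ha ρ).trans h1
    refine ⟨u ^ ρ⁻¹, ⟨?_, ?_⟩, Real.rpow_inv_rpow hu.le hρ.ne'⟩
    · have := Real.rpow_lt_rpow (Real.rpow_pos_of_pos ha ρ).le h1 (inv_pos.2 hρ)
      rwa [Real.rpow_rpow_inv ha.le hρ.ne'] at this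
    · have hx : 0 < x := ha.trans_le hax
      have := Real.rpow_lt_rpow hu.le h2 (inv_pos.2 hρ)
      rwa [Real.rpow_rpow_inv hx.le hρ.ne'] at this

lemma subst_rpow {ρ a x : ℝ} (hρ : 0 < ρ) (ha : 0 < a) (hx : a ≤ x) (G : ℝ → ℝ) :
    ∫ u in a ^ ρ..x ^ ρ, G u = ρ * ∫ τ in a..x, τ ^ (ρ - 1) * G (τ ^ ρ) := by
  have hax : a ^ ρ ≤ x ^ ρ := Real.rpow_le_rpow ha.le hx hρ.le
  rw [intervalIntegral.integral_of_le hax, intervalIntegral.integral_of_le hx,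
    MeasureTheory.integral_Ioc_eq_integral_Ioo, MeasureTheory.integral_Ioc_eq_integral_Ioo]
  rw [← rpow_image hρ ha hx]
  rw [integral_image_eq_integral_abs_deriv_smul measurableSet_Ioo
    (fun τ hτ => (Real.hasDerivAt_rpow_const
      (Or.inl (ne_of_gt (ha.trans hτ.1)))).hasDerivWithinAt)
    (fun p hp q hq h => by
      rcases lt_trichotomy p q with hlt | heq | hgt
      · exact absurd h (Real.rpow_lt_rpow (ha.trans hp.1).le hlt hρ).ne
      · exact heq
      · exact absurd h.symm (Real.rpow_lt_rpow (ha.trans hq.1).le hgt hρ).ne) G]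
  rw [← MeasureTheory.integral_const_mul]
  refine MeasureTheory.setIntegral_congr_fun measurableSet_Ioo (fun τ hτ => ?_)
  have hτ0 : 0 < τ := ha.trans hτ.1
  rw [abs_of_pos (by positivity : (0:ℝ) < ρ * τ ^ (ρ - 1))]
  simp [smul_eq_mul]; ring

lemma int_rpow_sub {δ : ℝ} (hδ : 0 < δ) {c y : ℝ} (hcy : c ≤ y) :
    ∫ u in c..y, (y - u) ^ (δ - 1) = (y - c) ^ δ / δ := by
  have h1 : ∫ u in c..y, (y - u) ^ (δ - 1) = ∫ t in (y - y)..(y - c), t ^ (δ - 1) := by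
    rw [← intervalIntegral.integral_comp_sub_left (fun t => t ^ (δ - 1)) y]
  rw [h1, sub_self, integral_rpow (Or.inl (by linarith)), Real.zero_rpow (by linarith : δ - 1 + 1 ≠ 0)]
  rw [sub_add_cancel]
  ring


lemma innerBeta {μ ν : ℝ} (hμ : 0 < μ) (hν : 0 < ν) {s y : ℝ} (hsy : s < y) :
    ∫ u in s..y, (y - u) ^ (μ - 1) * (u - s) ^ (ν - 1)
      = (y - s) ^ (μ + ν - 1) * (Real.Gamma ν * Real.Gamma μ / Real.Gamma (ν + μ)) := by
  set B := Real.Gamma ν * Real.Gamma μ / Real.Gamma (ν + μ) with hB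
  set L := y - s with hL
  have hL0 : 0 < L := by simp only [hL]; linarith
  have key := intervalIntegral.integral_comp_mul_add
    (a := (0:ℝ)) (b := 1) (fun u => (y - u) ^ (μ - 1) * (u - s) ^ (ν - 1)) hL0.ne' s
  have e1 : L * 0 + s = s := by ring
  have e2 : L * 1 + s = y := by rw [hL]; ring
  rw [e1, e2] at key
  have e3 : ∫ t in (0:ℝ)..1, (fun u => (y - u) ^ (μ - 1) * (u - s) ^ (ν - 1)) (L * t + s)
      = L ^ (μ - 1) * L ^ (ν - 1) * ∫ t in (0:ℝ)..1, t ^ (ν - 1) * (1 - t) ^ (μ - 1) := by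
    rw [← intervalIntegral.integral_const_mul]
    apply intervalIntegral.integral_congr
    intro t ht
    rw [Set.uIcc_of_le (by norm_num : (0:ℝ) ≤ 1)] at ht
    show (y - (L * t + s)) ^ (μ - 1) * (L * t + s - s) ^ (ν - 1)
      = L ^ (μ - 1) * L ^ (ν - 1) * (t ^ (ν - 1) * (1 - t) ^ (μ - 1))
    have h1 : y - (L * t + s) = L * (1 - t) := by rw [hL]; ring
    have h2 : L * t + s - s = L * t := by ring
    rw [h1, h2, Real.mul_rpow hL0.le (by linarith [ht.2]), Real.mul_rpow hL0.le ht.1]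
    ring
  rw [e3, realBeta hν hμ, ← hB, smul_eq_mul] at key
  have hI : (∫ u in s..y, (y - u) ^ (μ - 1) * (u - s) ^ (ν - 1))
      = L * (L ^ (μ - 1) * L ^ (ν - 1) * B) := by
    rw [key, ← mul_assoc, mul_inv_cancel₀ hL0.ne', one_mul]
  rw [hI]
  have hpow : L * (L ^ (μ - 1) * L ^ (ν - 1)) = L ^ (μ + ν - 1) := by
    calc L * (L ^ (μ - 1) * L ^ (ν - 1)) = L ^ (1:ℝ) * L ^ (μ - 1 + (ν - 1)) := by
          rw [Real.rpow_one, Real.rpow_add hL0]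
      _ = L ^ (1 + (μ - 1 + (ν - 1))) := (Real.rpow_add hL0 _ _).symm
      _ = L ^ (μ + ν - 1) := by ring_nf
  rw [← hpow]; ring


lemma sub_rpow_intble {r : ℝ} (hr : -1 < r) (d a b : ℝ) :
    IntervalIntegrable (fun s => (d - s) ^ r) volume a b := by
  have h := (intervalIntegral.intervalIntegrable_rpow' hr (a := d - a) (b := d - b)).comp_sub_left d
  simpa using h

lemma fubiniRL {G : ℝ → ℝ} (hG : Continuous G) {μ ν : ℝ} (hμ : 0 < μ) (hν : 0 < ν)
    {c y : ℝ} (hcy : c < y) :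
    ∫ u in c..y, (y - u) ^ (μ - 1) * ∫ s in c..u, (u - s) ^ (ν - 1) * G s
      = (Real.Gamma μ * Real.Gamma ν / Real.Gamma (μ + ν)) *
        ∫ s in c..y, (y - s) ^ (μ + ν - 1) * G s := by
  obtain ⟨M, hM⟩ := (isCompact_Icc (a := c) (b := y)).exists_bound_of_continuousOn
    hG.continuousOn
  have hM0 : 0 ≤ M := (norm_nonneg _).trans (hM c ⟨le_rfl, hcy.le⟩)
  set K : ℝ → ℝ → ℝ := fun u s => (y - u) ^ (μ - 1) * ((u - s) ^ (ν - 1) * G s) with hK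
  set F : ℝ → ℝ → ℝ := fun u s => Set.indicator (Set.Ioo c u) (K u) s with hF
  set R := volume.restrict (Set.Ioo c y) with hR
  have hKmeas : Measurable (fun p : ℝ × ℝ => K p.1 p.2) := by
    simp only [hK]; fun_prop
  have hS : MeasurableSet {p : ℝ × ℝ | p.2 ∈ Set.Ioo c p.1} := by
    apply MeasurableSet.inter
    · exact measurableSet_lt measurable_const measurable_snd
    · exact measurableSet_lt measurable_snd measurable_fst
  have hFS : (fun p : ℝ × ℝ => F p.1 p.2)
      = Set.indicator {p : ℝ × ℝ | p.2 ∈ Set.Ioo c p.1} (fun p => K p.1 p.2) := by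
    ext p
    by_cases h : p.2 ∈ Set.Ioo c p.1 <;>
      simp [hF, Set.indicator_apply, h]
  have hFmeas : AEStronglyMeasurable (fun p : ℝ × ℝ => F p.1 p.2) (R.prod R) := by
    rw [hFS]
    exact (hKmeas.indicator hS).aestronglyMeasurable
  have hslice : ∀ u, IntervalIntegrable (fun s => K u s) volume c u := by
    intro u
    exact ((sub_rpow_intble (by linarith) u c u).mul_continuousOn
      (hG.continuousOn (s := Set.uIcc c u))).const_mul _
  have hsliceOn : ∀ u ∈ Set.Ioo c y, IntegrableOn (K u) (Set.Ioo c u) volume := fun u hu =>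
    (intervalIntegrable_iff_integrableOn_Ioo_of_le hu.1.le).mp (hslice u)
  have hinner : ∀ u ∈ Set.Ioo c y, (∫ s, F u s ∂ R) = ∫ s in Set.Ioo c u, K u s := by
    intro u hu
    rw [hR]
    show (∫ s, (Set.Ioo c u).indicator (K u) s ∂(volume.restrict (Set.Ioo c y))) = _
    rw [MeasureTheory.integral_indicator measurableSet_Ioo,
      Measure.restrict_restrict measurableSet_Ioo,
      Set.inter_eq_self_of_subset_left (Set.Ioo_subset_Ioo_right hu.2.le)]
  have hsliceR : ∀ᵐ u ∂ R, Integrable (F u) R := by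
    rw [hR]
    refine (ae_restrict_iff' measurableSet_Ioo).2 (Filter.Eventually.of_forall fun u hu => ?_)
    show Integrable ((Set.Ioo c u).indicator (K u)) _
    refine (integrable_indicator_iff measurableSet_Ioo).2 ?_
    rw [IntegrableOn, Measure.restrict_restrict measurableSet_Ioo,
      Set.inter_eq_self_of_subset_left (Set.Ioo_subset_Ioo_right hu.2.le)]
    exact hsliceOn u hu
  have hbound : ∀ u ∈ Set.Ioo c y,
      (∫ s, ‖F u s‖ ∂ R) ≤ (y - u) ^ (μ - 1) * (M * ((y - c) ^ ν / ν)) := by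
    intro u hu
    have h1 : (∫ s, ‖F u s‖ ∂ R) = ∫ s in Set.Ioo c u, ‖K u s‖ := by
      have he : (fun s => ‖F u s‖) = (Set.Ioo c u).indicator (fun s => ‖K u s‖) := by
        ext s
        rw [hF]
        simp only [Set.indicator_apply]
        split_ifs <;> simp
      rw [hR, he, MeasureTheory.integral_indicator measurableSet_Ioo,
        Measure.restrict_restrict measurableSet_Ioo,
        Set.inter_eq_self_of_subset_left (Set.Ioo_subset_Ioo_right hu.2.le)]
    have hbint : IntervalIntegrable (fun s => (y - u) ^ (μ - 1) * ((u - s) ^ (ν - 1) * M))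
        volume c u := ((sub_rpow_intble (by linarith) u c u).mul_const _).const_mul _
    have h2 : ∫ s in Set.Ioo c u, ‖K u s‖
        ≤ ∫ s in Set.Ioo c u, (y - u) ^ (μ - 1) * ((u - s) ^ (ν - 1) * M) := by
      refine setIntegral_mono_on (hsliceOn u hu).norm
        ((intervalIntegrable_iff_integrableOn_Ioo_of_le hu.1.le).mp hbint)
        measurableSet_Ioo (fun s hs => ?_)
      have h3 : (0:ℝ) ≤ (y - u) ^ (μ - 1) := Real.rpow_nonneg (by linarith [hu.2]) _
      have h4 : (0:ℝ) ≤ (u - s) ^ (ν - 1) := Real.rpow_nonneg (by linarith [hs.2]) _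
      have h5 : |G s| ≤ M := by
        have := hM s ⟨hs.1.le, by linarith [hs.2, hu.2]⟩
        simpa using this
      have : ‖K u s‖ = (y - u) ^ (μ - 1) * ((u - s) ^ (ν - 1) * |G s|) := by
        rw [hK]
        simp only [Real.norm_eq_abs, abs_mul, abs_of_nonneg h3, abs_of_nonneg h4]
      rw [this]
      exact mul_le_mul_of_nonneg_left (mul_le_mul_of_nonneg_left h5 h4) h3
    have h6 : ∫ s in Set.Ioo c u, (y - u) ^ (μ - 1) * ((u - s) ^ (ν - 1) * M)
        = (y - u) ^ (μ - 1) * (M * ((u - c) ^ ν / ν)) := by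
      rw [← MeasureTheory.integral_Ioc_eq_integral_Ioo, ← intervalIntegral.integral_of_le hu.1.le,
        intervalIntegral.integral_const_mul]
      rw [intervalIntegral.integral_mul_const, int_rpow_sub hν hu.1.le]
      ring
    rw [h1]
    refine (h2.trans_eq h6).trans ?_
    have h7 : (u - c) ^ ν ≤ (y - c) ^ ν :=
      Real.rpow_le_rpow (by linarith [hu.1]) (by linarith [hu.2]) hν.le
    have h3 : (0:ℝ) ≤ (y - u) ^ (μ - 1) := Real.rpow_nonneg (by linarith [hu.2]) _
    apply mul_le_mul_of_nonneg_left _ h3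
    apply mul_le_mul_of_nonneg_left _ hM0
    gcongr
  have hbnd_int : Integrable (fun u => (y - u) ^ (μ - 1) * (M * ((y - c) ^ ν / ν))) R := by
    rw [hR]
    exact (intervalIntegrable_iff_integrableOn_Ioo_of_le hcy.le).mp
      ((sub_rpow_intble (by linarith) y c y).mul_const _)
  have hnormint : Integrable (fun u => ∫ s, ‖F u s‖ ∂ R) R := by
    refine hbnd_int.mono' hFmeas.norm.integral_prod_right' ?_
    rw [hR]
    refine (ae_restrict_iff' measurableSet_Ioo).2 (Filter.Eventually.of_forall fun u hu => ?_)
    rw [Real.norm_eq_abs, abs_of_nonneg (integral_nonneg fun s => norm_nonneg _)]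
    exact hbound u hu
  have hIntF : Integrable (fun p : ℝ × ℝ => F p.1 p.2) (R.prod R) :=
    (integrable_prod_iff hFmeas).2 ⟨hsliceR, hnormint⟩
  have hswap := MeasureTheory.integral_integral_swap (f := F) (μ := R) (ν := R) hIntF
  -- identify the LHS
  have hLHS : (∫ u in c..y, (y - u) ^ (μ - 1) * ∫ s in c..u, (u - s) ^ (ν - 1) * G s)
      = ∫ u, ∫ s, F u s ∂ R ∂ R := by
    rw [intervalIntegral.integral_of_le hcy.le, MeasureTheory.integral_Ioc_eq_integral_Ioo, hR]
    refine setIntegral_congr_fun measurableSet_Ioo (fun u hu => ?_)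
    rw [← hR, hinner u hu]
    rw [intervalIntegral.integral_of_le hu.1.le, MeasureTheory.integral_Ioc_eq_integral_Ioo,
      ← MeasureTheory.integral_const_mul]
  -- identify the RHS
  have hRHS : (∫ s, ∫ u, F u s ∂ R ∂ R)
      = (Real.Gamma μ * Real.Gamma ν / Real.Gamma (μ + ν)) *
        ∫ s in c..y, (y - s) ^ (μ + ν - 1) * G s := by
    rw [intervalIntegral.integral_of_le hcy.le, MeasureTheory.integral_Ioc_eq_integral_Ioo,
      ← MeasureTheory.integral_const_mul, hR]
    refine setIntegral_congr_fun measurableSet_Ioo (fun s hs => ?_)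
    have hind : (fun u => F u s) = (Set.Ioi s).indicator (fun u => K u s) := by
      ext u
      rw [hF]
      simp only [Set.indicator_apply, Set.mem_Ioo, Set.mem_Ioi]
      by_cases h : s < u
      · rw [if_pos ⟨hs.1, h⟩, if_pos h]
      · rw [if_neg (fun hh => h hh.2), if_neg h]
    rw [← hR, hind, hR, MeasureTheory.integral_indicator measurableSet_Ioi,
      Measure.restrict_restrict measurableSet_Ioi, Set.inter_comm, Set.Ioo_inter_Ioi,
      max_eq_right hs.1.le]
    have : (∫ u in Set.Ioo s y, K u s)
        = (∫ u in s..y, (y - u) ^ (μ - 1) * (u - s) ^ (ν - 1)) * G s := by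
      rw [intervalIntegral.integral_of_le hs.2.le, MeasureTheory.integral_Ioc_eq_integral_Ioo,
        ← MeasureTheory.integral_mul_const]
      refine setIntegral_congr_fun measurableSet_Ioo (fun u hu => ?_)
      rw [hK]
      ring
    rw [this, innerBeta hμ hν hs.2, add_comm ν μ]
    ring
  rw [hLHS, hswap, hRHS]


lemma contJ {G : ℝ → ℝ} (hG : Continuous G) {δ : ℝ} (hδ : 0 < δ) {c X : ℝ} (hcX : c < X) :
    ContinuousAt (fun y => ∫ u in c..y, (y - u) ^ (δ - 1) * G u) X := by
  set R := X - c + 1 with hRdef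
  have hR0 : 0 < R := by linarith
  set F : ℝ → ℝ → ℝ :=
    fun y v => Set.indicator (Set.Iio (y - c)) (fun v => v ^ (δ - 1) * G (y - v)) v with hFdef
  -- the shifted representation agrees with J near X
  have hagree : ∀ y, c < y → y - c < R →
      (∫ u in c..y, (y - u) ^ (δ - 1) * G u) = ∫ v in (0:ℝ)..R, F y v := by
    intro y hy1 hy2
    have h1 : (∫ u in c..y, (y - u) ^ (δ - 1) * G u)
        = ∫ v in (0:ℝ)..(y - c), v ^ (δ - 1) * G (y - v) := by
      have h2 := intervalIntegral.integral_comp_sub_left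
        (a := (0:ℝ)) (b := y - c) (fun u => (y - u) ^ (δ - 1) * G u) y
      rw [sub_zero, sub_sub_cancel] at h2
      rw [← h2]
      apply intervalIntegral.integral_congr
      intro v _
      simp [sub_sub_cancel]
    rw [h1]
    rw [intervalIntegral.integral_of_le (by linarith : (0:ℝ) ≤ y - c),
      intervalIntegral.integral_of_le hR0.le,
      MeasureTheory.integral_Ioc_eq_integral_Ioo, MeasureTheory.integral_Ioc_eq_integral_Ioo]
    rw [hFdef]
    show _ = ∫ v in Set.Ioo 0 R, (Set.Iio (y - c)).indicator _ v
    rw [MeasureTheory.integral_indicator measurableSet_Iio,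
      Measure.restrict_restrict measurableSet_Iio]
    have : Set.Iio (y - c) ∩ Set.Ioo 0 R = Set.Ioo 0 (y - c) := by
      ext v
      simp only [Set.mem_inter_iff, Set.mem_Iio, Set.mem_Ioo]
      constructor
      · rintro ⟨h1, h2, h3⟩; exact ⟨h2, h1⟩
      · rintro ⟨h1, h2⟩; exact ⟨h2, h1, by linarith⟩
    rw [this]
  -- continuity of the shifted representation
  obtain ⟨M, hM⟩ := (isCompact_Icc (a := X - 1 - R) (b := X + 1)).exists_bound_of_continuousOn
    hG.continuousOn
  have hM0 : 0 ≤ M := (norm_nonneg _).trans (hM (X + 1) ⟨by linarith, le_rfl⟩)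
  have hcont : ContinuousAt (fun y => ∫ v in (0:ℝ)..R, F y v) X := by
    apply intervalIntegral.continuousAt_of_dominated_interval
      (bound := fun v => v ^ (δ - 1) * M)
    · refine Filter.Eventually.of_forall (fun y => ?_)
      apply AEStronglyMeasurable.restrict
      apply Measurable.aestronglyMeasurable
      apply Measurable.indicator _ measurableSet_Iio
      fun_prop
    · filter_upwards [Ioo_mem_nhds (by linarith : X - 1 < X) (by linarith : X < X + 1)] with y hy
      refine Filter.Eventually.of_forall (fun v hv => ?_)
      rw [Set.uIoc_of_le hR0.le] at hv
      rw [hFdef]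
      show ‖Set.indicator _ _ v‖ ≤ _
      by_cases h : v ∈ Set.Iio (y - c)
      · rw [Set.indicator_of_mem h]
        rw [Real.norm_eq_abs, abs_mul, abs_of_nonneg (Real.rpow_nonneg hv.1.le _)]
        refine mul_le_mul_of_nonneg_left ?_ (Real.rpow_nonneg hv.1.le _)
        exact hM (y - v) ⟨by linarith [hy.1, hv.2], by linarith [hy.2, hv.1]⟩
      · rw [Set.indicator_of_notMem h]
        simp only [norm_zero]
        exact mul_nonneg (Real.rpow_nonneg hv.1.le _) hM0
    · exact (intervalIntegral.intervalIntegrable_rpow' (by linarith)).mul_const M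
    · have hae : ∀ᵐ v : ℝ, v ≠ X - c := by
        rw [MeasureTheory.ae_iff]
        simp only [not_ne_iff, Set.setOf_eq_eq_singleton]
        exact measure_singleton _
      filter_upwards [hae] with v hv _
      rcases lt_or_gt_of_ne hv with hlt | hgt
      · have hev : ∀ᶠ y in 𝓝 X, F y v = v ^ (δ - 1) * G (y - v) := by
          filter_upwards [Ioi_mem_nhds (show v + c < X by linarith)] with y hy
          rw [hFdef]
          exact Set.indicator_of_mem (by simp only [Set.mem_Iio]; linarith [Set.mem_Ioi.mp hy]) _
        have : ContinuousAt (fun y => v ^ (δ - 1) * G (y - v)) X :=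
          (continuousAt_const.mul ((hG.comp (continuous_sub_right v)).continuousAt))
        exact this.congr (Filter.EventuallyEq.symm hev)
      · have hev : ∀ᶠ y in 𝓝 X, F y v = 0 := by
          filter_upwards [Iio_mem_nhds (show X < v + c by linarith)] with y hy
          rw [hFdef]
          exact Set.indicator_of_notMem (by simp only [Set.mem_Iio]; push_neg; linarith [Set.mem_Iio.mp hy]) _
        exact continuousAt_const.congr (Filter.EventuallyEq.symm hev)
  apply hcont.congr
  filter_upwards [Ioo_mem_nhds hcX (by linarith : X < c + R)] with y hy
  exact (hagree y hy.1 (by linarith [hy.2])).symm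


lemma JFTC {G : ℝ → ℝ} (hG : Continuous G) {δ : ℝ} (hδ : 0 < δ) {c X : ℝ} (hcX : c < X) :
    HasDerivAt (fun Y => ∫ u in c..Y, (∫ s in c..u, (u - s) ^ (δ - 1) * G s))
      (∫ s in c..X, (X - s) ^ (δ - 1) * G s) X := by
  set J : ℝ → ℝ := fun y => ∫ s in c..y, (y - s) ^ (δ - 1) * G s with hJ
  have hJcont : ContinuousOn J (Set.Ioi c) := fun y hy =>
    (contJ hG hδ hy).continuousWithinAt
  obtain ⟨M, hM⟩ := (isCompact_Icc (a := c) (b := X)).exists_bound_of_continuousOn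
    hG.continuousOn
  have hM0 : 0 ≤ M := (norm_nonneg _).trans (hM c ⟨le_rfl, hcX.le⟩)
  have hJint : IntervalIntegrable J volume c X := by
    rw [intervalIntegrable_iff_integrableOn_Ioc_of_le hcX.le]
    refine MeasureTheory.IntegrableOn.congr_set_ae ?_ MeasureTheory.Ioo_ae_eq_Ioc.symm
    apply Integrable.mono' (g := fun _ => M * ((X - c) ^ δ / δ))
    · exact integrableOn_const measure_Ioo_lt_top.ne
    · exact ((hJcont.mono Set.Ioo_subset_Ioi_self).aestronglyMeasurable measurableSet_Ioo)
    · refine (ae_restrict_iff' measurableSet_Ioo).2 (Filter.Eventually.of_forall fun y hy => ?_)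
      have hint1 : IntervalIntegrable (fun u => (y - u) ^ (δ - 1) * G u) volume c y :=
        (sub_rpow_intble (by linarith) y c y).mul_continuousOn
          (hG.continuousOn (s := Set.uIcc c y))
      have hb1 : ‖J y‖ ≤ ∫ u in c..y, (y - u) ^ (δ - 1) * M := by
        refine (intervalIntegral.norm_integral_le_integral_norm hy.1.le).trans ?_
        refine intervalIntegral.integral_mono_on hy.1.le hint1.norm
          ((sub_rpow_intble (by linarith) y c y).mul_const M) (fun u hu => ?_)
        rw [Real.norm_eq_abs, abs_mul, abs_of_nonneg (Real.rpow_nonneg (by linarith [hu.2]) _)]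
        refine mul_le_mul_of_nonneg_left ?_ (Real.rpow_nonneg (by linarith [hu.2]) _)
        exact hM u ⟨hu.1, by linarith [hu.2, hy.2]⟩
      rw [intervalIntegral.integral_mul_const, int_rpow_sub hδ hy.1.le] at hb1
      refine hb1.trans ?_
      have h8 : (y - c) ^ δ ≤ (X - c) ^ δ :=
        Real.rpow_le_rpow (by linarith [hy.1]) (by linarith [hy.2]) hδ.le
      rw [mul_comm]
      gcongr
  exact intervalIntegral.integral_hasDerivAt_right hJint
    ⟨Set.Ioi c, Ioi_mem_nhds hcX, hJcont.aestronglyMeasurable measurableSet_Ioi⟩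
    (contJ hG hδ hcX)

theorem mainAux (α β ρ a b : ℝ) (hα0 : 0 < α) (hαβ : α < β)
    (hβ1 : β < 1) (ha : 0 < a) (hab : a < b) (hρ : 0 < ρ)
    (f : ℝ → ℝ) (hf : Continuous f) :
    ∀ x : ℝ, a < x → x < b →
      genFracDeriv ρ α a (genFracIntegral ρ β a f) x =
        genFracIntegral ρ (β - α) a f x := by
  intro x hax hxb
  set c := a ^ ρ with hc
  set δ := β - α with hδdef
  have hδ : 0 < δ := by rw [hδdef]; linarith
  have hgc : Continuous (gAux f ρ) := by
    unfold gAux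
    exact hf.comp (continuous_abs.rpow_const fun u => Or.inr (by positivity))
  have K1 : ∀ (φ : ℝ → ℝ) (μ z : ℝ), a ≤ z →
      genFracIntegral ρ μ a φ z
        = (ρ ^ (-μ) / Real.Gamma μ) *
          ∫ u in c..z ^ ρ, (z ^ ρ - u) ^ (μ - 1) * gAux φ ρ u := by
    intro φ μ z hz
    rw [genFracIntegral,
      subst_rpow hρ ha hz (fun u => (z ^ ρ - u) ^ (μ - 1) * gAux φ ρ u)]
    have hcong : (∫ τ in a..z, τ ^ (ρ - 1) *
          ((fun u => (z ^ ρ - u) ^ (μ - 1) * gAux φ ρ u) (τ ^ ρ)))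
        = ∫ τ in a..z, τ ^ (ρ - 1) * (z ^ ρ - τ ^ ρ) ^ (μ - 1) * φ τ := by
      apply intervalIntegral.integral_congr
      intro τ hτ
      rw [Set.uIcc_of_le hz] at hτ
      have hτ0 : 0 < τ := lt_of_lt_of_le ha hτ.1
      show τ ^ (ρ - 1) * ((z ^ ρ - τ ^ ρ) ^ (μ - 1) * gAux φ ρ (τ ^ ρ)) = _
      unfold gAux
      rw [abs_of_nonneg (Real.rpow_nonneg hτ0.le ρ), Real.rpow_rpow_inv hτ0.le hρ.ne']
      ring
    rw [hcong]
    have hρs : ρ ^ (1 - μ) = ρ ^ (-μ) * ρ := by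
      rw [show (1:ℝ) - μ = -μ + 1 by ring, Real.rpow_add hρ, Real.rpow_one]
    rw [hρs]
    ring
  have hx0 : 0 < x := ha.trans hax
  have hcX : c < x ^ ρ := Real.rpow_lt_rpow ha.le hax hρ
  have hΓ1α : 0 < Real.Gamma (1 - α) := Real.Gamma_pos_of_pos (by linarith)
  have hΓβ : 0 < Real.Gamma β := Real.Gamma_pos_of_pos (by linarith)
  have hΓδ : 0 < Real.Gamma δ := Real.Gamma_pos_of_pos hδ
  have hΓ1δ : 0 < Real.Gamma (1 + δ) := Real.Gamma_pos_of_pos (by linarith)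
  set Cst := (ρ ^ (-(1 - α)) / Real.Gamma (1 - α)) * (ρ ^ (-β) / Real.Gamma β)
      * (Real.Gamma (1 - α) * Real.Gamma β / Real.Gamma ((1 - α) + β))
      * (Real.Gamma (1 + δ) / Real.Gamma δ) with hCst
  set Ψ : ℝ → ℝ := fun Y => ∫ u in c..Y, (∫ s in c..u, (u - s) ^ (δ - 1) * gAux f ρ s)
    with hΨdef
  have hkey : ∀ y ∈ Set.Ioo a b,
      genFracIntegral ρ (1 - α) a (genFracIntegral ρ β a f) y = Cst * Ψ (y ^ ρ) := by
    intro y hy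
    have hay : a ≤ y := hy.1.le
    have hcY : c < y ^ ρ := Real.rpow_lt_rpow ha.le hy.1 hρ
    rw [K1 _ (1 - α) y hay]
    have hinner : (∫ u in c..y ^ ρ, (y ^ ρ - u) ^ ((1 - α) - 1) *
          gAux (genFracIntegral ρ β a f) ρ u)
        = (ρ ^ (-β) / Real.Gamma β) * ∫ u in c..y ^ ρ,
            (y ^ ρ - u) ^ ((1 - α) - 1) * ∫ s in c..u, (u - s) ^ (β - 1) * gAux f ρ s := by
      rw [← intervalIntegral.integral_const_mul]
      apply intervalIntegral.integral_congr
      intro u hu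
      rw [Set.uIcc_of_le hcY.le] at hu
      have hu0 : 0 < u := lt_of_lt_of_le (Real.rpow_pos_of_pos ha ρ) hu.1
      have hz' : a ≤ |u| ^ ρ⁻¹ := by
        rw [abs_of_pos hu0]
        calc a = (a ^ ρ) ^ ρ⁻¹ := (Real.rpow_rpow_inv ha.le hρ.ne').symm
          _ ≤ u ^ ρ⁻¹ := Real.rpow_le_rpow (Real.rpow_nonneg ha.le ρ) hu.1 (by positivity)
      show (y ^ ρ - u) ^ ((1 - α) - 1) * genFracIntegral ρ β a f (|u| ^ ρ⁻¹) = _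
      rw [K1 f β _ hz']
      have hup : (|u| ^ ρ⁻¹) ^ ρ = u := by
        rw [abs_of_pos hu0, Real.rpow_inv_rpow hu0.le hρ.ne']
      rw [hup]
      ring
    rw [hinner]
    rw [fubiniRL hgc (by linarith : (0:ℝ) < 1 - α) (by linarith : (0:ℝ) < β) hcY]
    have h2 := fubiniRL hgc (show (0:ℝ) < 1 by norm_num) hδ hcY
    rw [show (1:ℝ) - 1 = 0 by norm_num] at h2
    simp only [Real.rpow_zero, one_mul] at h2
    rw [Real.Gamma_one, one_mul, show (1:ℝ) + δ - 1 = δ by ring] at h2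
    rw [show 1 - α + β - 1 = δ by rw [hδdef]; ring]
    simp only [hΨdef]
    rw [h2]
    rw [hCst]
    have hne1 : Real.Gamma (1 - α) ≠ 0 := hΓ1α.ne'
    have hne2 : Real.Gamma β ≠ 0 := hΓβ.ne'
    have hne3 : Real.Gamma (-α + β) ≠ 0 := by
      rw [show -α + β = β - α by ring]
      exact (Real.Gamma_pos_of_pos (by linarith)).ne'
    have hne4 : Real.Gamma (1 - α + β) ≠ 0 := (Real.Gamma_pos_of_pos (by linarith)).ne'
    have hne5 : Real.Gamma (1 + δ) ≠ 0 := hΓ1δ.ne'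
    have hne6 : Real.Gamma δ ≠ 0 := hΓδ.ne'
    field_simp [hne1, hne2, hne3, hne4, hne5, hne6]
  have hΨderiv : HasDerivAt Ψ
      (∫ s in c..x ^ ρ, (x ^ ρ - s) ^ (δ - 1) * gAux f ρ s) (x ^ ρ) :=
    JFTC hgc hδ hcX
  have hxpow : HasDerivAt (fun y : ℝ => y ^ ρ) (ρ * x ^ (ρ - 1)) x :=
    Real.hasDerivAt_rpow_const (Or.inl hx0.ne')
  have hcomp : HasDerivAt (fun y => Cst * Ψ (y ^ ρ))
      (Cst * ((∫ s in c..x ^ ρ, (x ^ ρ - s) ^ (δ - 1) * gAux f ρ s) * (ρ * x ^ (ρ - 1)))) x :=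
    by have := (hΨderiv.comp x hxpow).const_mul Cst; exact this
  have hev : (genFracIntegral ρ (1 - α) a (genFracIntegral ρ β a f))
      =ᶠ[𝓝 x] (fun y => Cst * Ψ (y ^ ρ)) := by
    filter_upwards [Ioo_mem_nhds hax hxb] with y hy
    exact hkey y hy
  rw [genFracDeriv, hev.deriv_eq, hcomp.deriv, K1 f δ x (le_of_lt hax)]
  set J := ∫ s in c..x ^ ρ, (x ^ ρ - s) ^ (δ - 1) * gAux f ρ s with hJdef
  have hxx : x ^ (1 - ρ) * x ^ (ρ - 1) = 1 := by
    rw [← Real.rpow_add hx0, show (1 - ρ) + (ρ - 1) = 0 by ring, Real.rpow_zero]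
  have hΓeq : Real.Gamma ((1 - α) + β) = Real.Gamma (1 + δ) := by
    rw [show (1 - α) + β = 1 + δ by rw [hδdef]; ring]
  have hρs : ρ ^ (-(1 - α)) * ρ ^ (-β) * ρ = ρ ^ (-δ) := by
    calc ρ ^ (-(1 - α)) * ρ ^ (-β) * ρ
        = ρ ^ (-(1 - α) + -β) * ρ ^ (1:ℝ) := by
          rw [← Real.rpow_add hρ, Real.rpow_one]
      _ = ρ ^ (-(1 - α) + -β + 1) := (Real.rpow_add hρ _ _).symm
      _ = ρ ^ (-δ) := by rw [hδdef]; ring_nf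
  rw [hCst, hΓeq]
  rw [show x ^ (1 - ρ) * ((ρ ^ (-(1 - α)) / Real.Gamma (1 - α)) * (ρ ^ (-β) / Real.Gamma β)
        * (Real.Gamma (1 - α) * Real.Gamma β / Real.Gamma (1 + δ))
        * (Real.Gamma (1 + δ) / Real.Gamma δ) * (J * (ρ * x ^ (ρ - 1))))
      = (x ^ (1 - ρ) * x ^ (ρ - 1)) * ((ρ ^ (-(1 - α)) * ρ ^ (-β) * ρ)
        * ((Real.Gamma (1 - α) * Real.Gamma β * Real.Gamma (1 + δ))
          / (Real.Gamma (1 - α) * Real.Gamma β * Real.Gamma (1 + δ) * Real.Gamma δ)) * J)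
    from by ring]
  rw [hxx, hρs, one_mul]
  rw [show (Real.Gamma (1 - α) * Real.Gamma β * Real.Gamma (1 + δ))
        / (Real.Gamma (1 - α) * Real.Gamma β * Real.Gamma (1 + δ) * Real.Gamma δ)
      = 1 / Real.Gamma δ from by
    field_simp]
  ring

/-- For `0 < α < β < 1`, `0 < a < b < ∞`, `ρ > 0` and `f` continuous
on `[a, b]`, the generalized fractional derivative of order `α` of the generalized
fractional integral of order `β` of `f` equals the generalized fractional integral of
order `β - α` of `f` at every `x` with `a < x < b`. -/
theorem genFracDeriv_genFracIntegral_comp (α β ρ a b : ℝ) (hα0 : 0 < α) (hαβ : α < β)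
    (hβ1 : β < 1) (ha : 0 < a) (hab : a < b) (hρ : 0 < ρ)
    (f : ℝ → ℝ) (hf : ContinuousOn f (Set.Icc a b)) :
    ∀ x : ℝ, a < x → x < b →
      genFracDeriv ρ α a (genFracIntegral ρ β a f) x =
        genFracIntegral ρ (β - α) a f x := by
  intro x hax hxb
  set F : ℝ → ℝ := fun t => f (max a (min t b)) with hF
  have hFc : Continuous F := by
    apply hf.comp_continuous
      (continuous_const.max (continuous_id.min continuous_const))
    intro t
    exact ⟨le_max_left _ _, max_le hab.le (min_le_right t b)⟩
  have hagree : ∀ t ∈ Set.Icc a b, F t = f t := by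
    intro t ht
    rw [hF]
    show f (max a (min t b)) = f t
    rw [min_eq_left ht.2, max_eq_right ht.1]
  have hIβ : ∀ y ∈ Set.Icc a b,
      genFracIntegral ρ β a f y = genFracIntegral ρ β a F y := by
    intro y hy
    rw [genFracIntegral, genFracIntegral]
    congr 1
    apply intervalIntegral.integral_congr
    intro τ hτ
    rw [Set.uIcc_of_le hy.1] at hτ
    beta_reduce
    rw [hagree τ ⟨hτ.1, hτ.2.trans hy.2⟩]
  have hev : genFracIntegral ρ (1 - α) a (genFracIntegral ρ β a f)
      =ᶠ[𝓝 x] genFracIntegral ρ (1 - α) a (genFracIntegral ρ β a F) := by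
    filter_upwards [Ioo_mem_nhds hax hxb] with y hy
    rw [genFracIntegral, genFracIntegral]
    congr 1
    apply intervalIntegral.integral_congr
    intro τ hτ
    rw [Set.uIcc_of_le hy.1.le] at hτ
    beta_reduce
    rw [hIβ τ ⟨hτ.1, hτ.2.trans hy.2.le⟩]
  have hR : genFracIntegral ρ (β - α) a f x = genFracIntegral ρ (β - α) a F x := by
    rw [genFracIntegral, genFracIntegral]
    congr 1
    apply intervalIntegral.integral_congr
    intro τ hτ
    rw [Set.uIcc_of_le hax.le] at hτ
    beta_reduce
    rw [hagree τ ⟨hτ.1, hτ.2.trans hxb.le⟩]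
  rw [genFracDeriv, hev.deriv_eq, hR]
  exact mainAux α β ρ a b hα0 hαβ hβ1 ha hab hρ F hFc x hax hxb
end

section
/- Let α > 0, ρ > 0, let s be a complex number with Re(s)/ρ > 0, and let f : (0,∞) → ℂ be such that t ↦ t^{Re(s) + αρ - 1} f(t) is integrable on (0,∞) and the Mellin transform of the function x ↦ (ρI^α_{∞-} f)(x) exists at s. Then the Mellin transform of the right-sided generalized fractional integral satisfies M[ρI^α_{∞-} f](s) = [Γ(s/ρ) / (Γ(s/ρ + α) ρ^α)] · M[f](s + αρ). -/
open MeasureTheory Filter Real Complex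

open Set


private lemma beta_scaled_integrableOn {u v : ℂ} (hu : 0 < u.re) (hv : 0 < v.re)
    {T : ℝ} (hT : 0 < T) :
    IntegrableOn (fun y : ℝ => (y : ℂ) ^ (u - 1) * (((T - y : ℝ)) : ℂ) ^ (v - 1))
      (Ioo 0 T) := by
  have h1 := (Complex.betaIntegral_convergent hu hv).comp_mul_right (c := T⁻¹)
  have e0 : (0 : ℝ) / T⁻¹ = 0 := by simp
  have e1 : (1 : ℝ) / T⁻¹ = T := by field_simp
  rw [e0, e1] at h1
  have h2 : IntegrableOn
      (fun y : ℝ => ((y * T⁻¹ : ℝ) : ℂ) ^ (u - 1) * (1 - ((y * T⁻¹ : ℝ) : ℂ)) ^ (v - 1))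
      (Ioo 0 T) := by
    have := (intervalIntegrable_iff_integrableOn_Ioc_of_le hT.le).mp h1
    exact this.mono_set Ioo_subset_Ioc_self
  have h3 := (h2.const_mul ((T : ℂ) ^ (u - 1) * (T : ℂ) ^ (v - 1)))
  refine IntegrableOn.congr_fun h3 (fun y hy => ?_) measurableSet_Ioo
  obtain ⟨hy0, hyT⟩ := hy
  have hTc : (T : ℂ) ≠ 0 := Complex.ofReal_ne_zero.mpr hT.ne'
  have hyT' : 0 ≤ y * T⁻¹ := by positivity
  have h4 : (y : ℂ) ^ (u - 1) = (T : ℂ) ^ (u - 1) * ((y * T⁻¹ : ℝ) : ℂ) ^ (u - 1) := by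
    rw [← Complex.mul_cpow_ofReal_nonneg hT.le hyT']
    congr 1
    push_cast
    field_simp [hTc]
  have h5 : ((T - y : ℝ) : ℂ) ^ (v - 1)
      = (T : ℂ) ^ (v - 1) * (1 - ((y * T⁻¹ : ℝ) : ℂ)) ^ (v - 1) := by
    have : (1 : ℂ) - ((y * T⁻¹ : ℝ) : ℂ) = ((1 - y * T⁻¹ : ℝ) : ℂ) := by push_cast; ring
    rw [this, ← Complex.mul_cpow_ofReal_nonneg hT.le
      (by rw [sub_nonneg]; rw [← div_eq_mul_inv]; exact (div_le_one hT).mpr hyT.le)]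
    congr 2
    push_cast
    field_simp [hTc]
  rw [h4, h5]; ring

private lemma key_eqon {ρ α : ℝ} (hρ : 0 < ρ) {w : ℂ} {τ : ℝ} (hτ : 0 < τ) :
    ∀ x ∈ Ioo (0:ℝ) τ,
      x ^ (ρ - 1) • (Ioo (0:ℝ) (τ ^ ρ)).indicator
        (fun y : ℝ => (y : ℂ) ^ (w / ρ - 1) * (((τ ^ ρ - y : ℝ)) : ℂ) ^ ((α : ℂ) - 1)) (x ^ ρ)
      = (x : ℂ) ^ (w - 1) * (((τ ^ ρ - x ^ ρ : ℝ)) : ℂ) ^ ((α : ℂ) - 1) := by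
  intro x hx
  have hρc : (ρ : ℂ) ≠ 0 := Complex.ofReal_ne_zero.mpr hρ.ne'
  have hxc : (x : ℂ) ≠ 0 := Complex.ofReal_ne_zero.mpr hx.1.ne'
  have hmem : x ^ ρ ∈ Ioo (0:ℝ) (τ ^ ρ) :=
    ⟨Real.rpow_pos_of_pos hx.1 ρ, Real.rpow_lt_rpow hx.1.le hx.2 hρ⟩
  rw [Set.indicator_of_mem hmem, Complex.real_smul,
    Complex.ofReal_cpow hx.1.le, ← Complex.cpow_mul_ofReal_nonneg hx.1.le ρ (w / ρ - 1),
    ← mul_assoc, ← Complex.cpow_add _ _ hxc]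
  congr 2
  push_cast
  rw [mul_sub, mul_one, mul_div_cancel₀ _ hρc]
  ring

private lemma key_integrableOn {ρ α : ℝ} (hρ : 0 < ρ) (hα : 0 < α) {w : ℂ} (hw : 0 < w.re)
    {τ : ℝ} (hτ : 0 < τ) :
    IntegrableOn (fun x : ℝ => (x : ℂ) ^ (w - 1) * (((τ ^ ρ - x ^ ρ : ℝ)) : ℂ) ^ ((α : ℂ) - 1))
      (Ioo 0 τ) := by
  have hT : 0 < τ ^ ρ := Real.rpow_pos_of_pos hτ ρ
  have hwρ : 0 < (w / (ρ : ℂ)).re := by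
    rw [Complex.div_ofReal_re]; exact div_pos hw hρ
  have hg : Integrable ((Ioo (0:ℝ) (τ ^ ρ)).indicator
      (fun y : ℝ => (y : ℂ) ^ (w / ρ - 1) * (((τ ^ ρ - y : ℝ)) : ℂ) ^ ((α : ℂ) - 1))) := by
    rw [integrable_indicator_iff measurableSet_Ioo]
    exact beta_scaled_integrableOn hwρ (by simpa using hα) hT
  have h1 := (integrableOn_Ioi_comp_rpow_iff' (p := ρ) _ hρ.ne').mpr hg.integrableOn
  exact IntegrableOn.congr_fun (h1.mono_set Ioo_subset_Ioi_self)
    (key_eqon hρ hτ) measurableSet_Ioo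

private lemma key_value {ρ α : ℝ} (hρ : 0 < ρ) (hα : 0 < α) {w : ℂ} (hw : 0 < w.re)
    {τ : ℝ} (hτ : 0 < τ) :
    ∫ x in Ioo 0 τ, (x : ℂ) ^ (w - 1) * (((τ ^ ρ - x ^ ρ : ℝ)) : ℂ) ^ ((α : ℂ) - 1)
      = (τ : ℂ) ^ (w + (α * ρ : ℝ) - ρ) * ((ρ : ℂ)⁻¹ * Complex.betaIntegral (w / ρ) α) := by
  have hT : 0 < τ ^ ρ := Real.rpow_pos_of_pos hτ ρ
  have hρc : (ρ : ℂ) ≠ 0 := Complex.ofReal_ne_zero.mpr hρ.ne'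
  set g : ℝ → ℂ := (Ioo (0:ℝ) (τ ^ ρ)).indicator
      (fun y : ℝ => (y : ℂ) ^ (w / ρ - 1) * (((τ ^ ρ - y : ℝ)) : ℂ) ^ ((α : ℂ) - 1)) with hgdef
  have step1 : ∫ x in Ioo 0 τ, (x : ℂ) ^ (w - 1) * (((τ ^ ρ - x ^ ρ : ℝ)) : ℂ) ^ ((α : ℂ) - 1)
      = ∫ x in Ioi 0, x ^ (ρ - 1) • g (x ^ ρ) := by
    have hzero : ∀ x ∈ Ioi (0:ℝ), x ∉ Ioo (0:ℝ) τ → x ^ (ρ - 1) • g (x ^ ρ) = 0 := by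
      intro x hx hx'
      have hxτ : τ ≤ x := by
        by_contra h
        exact hx' ⟨hx, lt_of_not_ge h⟩
      have : τ ^ ρ ≤ x ^ ρ := Real.rpow_le_rpow hτ.le hxτ hρ.le
      rw [hgdef, Set.indicator_of_notMem (by simp [this.not_gt]), smul_zero]
    rw [show (∫ x in Ioi 0, x ^ (ρ - 1) • g (x ^ ρ))
        = ∫ x in Ioi 0, (Ioo (0:ℝ) τ).indicator
            (fun x => (x : ℂ) ^ (w - 1) * (((τ ^ ρ - x ^ ρ : ℝ)) : ℂ) ^ ((α : ℂ) - 1)) x from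
      setIntegral_congr_fun measurableSet_Ioi (fun x hx => by
        by_cases hmem : x ∈ Ioo (0:ℝ) τ
        · rw [Set.indicator_of_mem hmem]; exact key_eqon hρ hτ x hmem
        · rw [Set.indicator_of_notMem hmem]; exact hzero x hx hmem)]
    rw [setIntegral_indicator measurableSet_Ioo,
      Set.inter_eq_self_of_subset_right Ioo_subset_Ioi_self]
  rw [step1]
  have step2 : (∫ x in Ioi 0, x ^ (ρ - 1) • g (x ^ ρ)) = ρ⁻¹ • ∫ y in Ioi 0, g y := by
    rw [← integral_comp_rpow_Ioi_of_pos (g := g) hρ, ← integral_smul]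
    congr 1
    ext x
    rw [smul_smul, ← mul_assoc, inv_mul_cancel₀ hρ.ne', one_mul]
  rw [step2]
  have step3 : (∫ y in Ioi 0, g y)
      = (τ ^ ρ : ℝ) ^ (w / ρ + α - 1) * Complex.betaIntegral (w / ρ) α := by
    rw [hgdef, setIntegral_indicator measurableSet_Ioo,
      Set.inter_eq_self_of_subset_right Ioo_subset_Ioi_self,
      ← integral_Ioc_eq_integral_Ioo, ← intervalIntegral.integral_of_le hT.le]
    rw [← Complex.betaIntegral_scaled (w / ρ) α hT]
    congr 1
    ext y
    push_cast
    ring_nf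
  rw [step3]
  have step4 : ((τ ^ ρ : ℝ) : ℂ) ^ (w / ρ + (α : ℂ) - 1) = (τ : ℂ) ^ (w + (α * ρ : ℝ) - ρ) := by
    rw [← Complex.cpow_mul_ofReal_nonneg hτ.le ρ (w / ρ + α - 1)]
    congr 1
    push_cast
    rw [mul_sub, mul_add, mul_one, mul_div_cancel₀ _ hρc]
    ring
  rw [step4, Complex.real_smul, Complex.ofReal_inv]
  ring

private lemma key_norm_eqon {ρ α : ℝ} (hρ : 0 < ρ) {r : ℝ} {τ : ℝ} :
    ∀ x ∈ Ioo (0:ℝ) τ,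
      ‖(x : ℂ) ^ ((r : ℂ) - 1) * (((τ ^ ρ - x ^ ρ : ℝ)) : ℂ) ^ ((α : ℂ) - 1)‖
        = x ^ (r - 1) * (τ ^ ρ - x ^ ρ) ^ (α - 1) := by
  intro x hx
  have hbase : 0 < τ ^ ρ - x ^ ρ :=
    sub_pos.mpr (Real.rpow_lt_rpow hx.1.le hx.2 hρ)
  rw [norm_mul,
    Complex.norm_cpow_eq_rpow_re_of_pos hx.1, Complex.norm_cpow_eq_rpow_re_of_pos hbase]
  norm_num

private lemma key_integrableOn_real {ρ α : ℝ} (hρ : 0 < ρ) (hα : 0 < α) {r : ℝ} (hr : 0 < r)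
    {τ : ℝ} (hτ : 0 < τ) :
    IntegrableOn (fun x : ℝ => x ^ (r - 1) * (τ ^ ρ - x ^ ρ) ^ (α - 1)) (Ioo 0 τ) := by
  have h := (key_integrableOn hρ hα (w := (r : ℂ)) (by simpa using hr) hτ).norm
  exact IntegrableOn.congr_fun h (key_norm_eqon hρ) measurableSet_Ioo

private lemma key_value_real {ρ α : ℝ} (hρ : 0 < ρ) (hα : 0 < α) {r : ℝ} (hr : 0 < r)
    {τ : ℝ} (hτ : 0 < τ) :
    ∫ x in Ioo 0 τ, x ^ (r - 1) * (τ ^ ρ - x ^ ρ) ^ (α - 1)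
      = τ ^ (r + α * ρ - ρ) *
          (ρ⁻¹ * (Real.Gamma (r / ρ) * Real.Gamma α / Real.Gamma (r / ρ + α))) := by
  have hrρ : 0 < ((r : ℂ) / (ρ : ℂ)).re := by
    rw [Complex.div_ofReal_re]; simpa using div_pos hr hρ
  have hαre : 0 < ((α : ℂ)).re := by simpa using hα
  have hΓne : Complex.Gamma ((r : ℂ) / ρ + α) ≠ 0 :=
    Complex.Gamma_ne_zero_of_re_pos (by rw [Complex.add_re, Complex.div_ofReal_re]; simp; positivity)
  have hB : Complex.betaIntegral ((r : ℂ) / ρ) α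
      = ((Real.Gamma (r / ρ) * Real.Gamma α / Real.Gamma (r / ρ + α) : ℝ) : ℂ) := by
    have h1 := Complex.Gamma_mul_Gamma_eq_betaIntegral hrρ hαre
    have h2 : Complex.betaIntegral ((r : ℂ) / ρ) α
        = Complex.Gamma ((r : ℂ) / ρ) * Complex.Gamma α / Complex.Gamma ((r : ℂ) / ρ + α) := by
      rw [eq_div_iff hΓne, mul_comm]
      exact h1.symm
    rw [h2]
    have e1 : ((r : ℂ) / ρ) = ((r / ρ : ℝ) : ℂ) := by push_cast; ring
    rw [e1, ← Complex.ofReal_add, Complex.Gamma_ofReal, Complex.Gamma_ofReal,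
      Complex.Gamma_ofReal]
    push_cast
    ring
  apply Complex.ofReal_injective
  rw [show ((∫ x in Ioo 0 τ, x ^ (r - 1) * (τ ^ ρ - x ^ ρ) ^ (α - 1) : ℝ) : ℂ)
      = ∫ x in Ioo 0 τ, ((x ^ (r - 1) * (τ ^ ρ - x ^ ρ) ^ (α - 1) : ℝ) : ℂ) from
    (integral_ofReal (𝕜 := ℂ)).symm]
  have hcongr : ∫ x in Ioo 0 τ, ((x ^ (r - 1) * (τ ^ ρ - x ^ ρ) ^ (α - 1) : ℝ) : ℂ)
      = ∫ x in Ioo 0 τ, (x : ℂ) ^ ((r : ℂ) - 1) * (((τ ^ ρ - x ^ ρ : ℝ)) : ℂ) ^ ((α : ℂ) - 1) := by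
    refine setIntegral_congr_fun measurableSet_Ioo (fun x hx => ?_)
    have hbase : (0:ℝ) ≤ τ ^ ρ - x ^ ρ :=
      (sub_pos.mpr (Real.rpow_lt_rpow hx.1.le hx.2 hρ)).le
    rw [Complex.ofReal_mul, Complex.ofReal_cpow hx.1.le, Complex.ofReal_cpow hbase]
    push_cast
    ring
  rw [hcongr, key_value hρ hα (by simpa using hr) hτ, hB,
    show ((r : ℂ) + ((α * ρ : ℝ) : ℂ) - (ρ : ℂ)) = ((r + α * ρ - ρ : ℝ) : ℂ) by push_cast; ring,
    ← Complex.ofReal_cpow hτ.le (r + α * ρ - ρ)]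
  push_cast
  ring


/-- The right-sided generalized (Katugampola) fractional integral of order `α`
with parameter `ρ`, of Liouville type (`b = ∞`), for a complex-valued function `f`. -/
noncomputable def genFracIntegralRight (ρ α : ℝ) (f : ℝ → ℂ) (x : ℝ) : ℂ :=
  (ρ ^ (1 - α) / Real.Gamma α) •
    ∫ τ in Set.Ioi x, (τ ^ (ρ - 1) * (τ ^ ρ - x ^ ρ) ^ (α - 1)) • f τ

/-- For `α > 0`, `ρ > 0` and `s : ℂ` with `Re(s)/ρ > 0`, if
`t ↦ t^{Re(s)+αρ-1} f(t)` is integrable on `(0,∞)` and the Mellin transform of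
`ρI^α_{∞-} f` exists at `s`, then
`M[ρI^α_{∞-} f](s) = [Γ(s/ρ)/(Γ(s/ρ + α) ρ^α)] M[f](s + αρ)`. -/
theorem mellin_genFracIntegralRight (α ρ : ℝ) (s : ℂ) (hα : 0 < α) (hρ : 0 < ρ)
    (hs : 0 < s.re / ρ) (f : ℝ → ℂ)
    (hf : IntegrableOn (fun t : ℝ => t ^ (s.re + α * ρ - 1) • f t) (Set.Ioi 0))
    (hM : MellinConvergent (genFracIntegralRight ρ α f) s) :
    mellin (genFracIntegralRight ρ α f) s =
      (Complex.Gamma (s / ρ) / (Complex.Gamma (s / ρ + α) * (ρ : ℂ) ^ (α : ℂ))) *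
        mellin f (s + (α : ℂ) * (ρ : ℂ)) := by
  have hsre : 0 < s.re := by
    have := mul_pos hs hρ
    rwa [div_mul_cancel₀ _ hρ.ne'] at this
  have hρc : (ρ : ℂ) ≠ 0 := Complex.ofReal_ne_zero.mpr hρ.ne'
  have hsρre : 0 < (s / (ρ : ℂ)).re := by rw [Complex.div_ofReal_re]; exact hs
  have hαre : 0 < ((α : ℂ)).re := by simpa using hα
  -- measurability of f
  have hfm : AEStronglyMeasurable f (volume.restrict (Set.Ioi 0)) := by
    have h1 := hf.aestronglyMeasurable
    have h2 : AEStronglyMeasurable (fun t : ℝ => (t ^ (s.re + α * ρ - 1))⁻¹)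
        (volume.restrict (Set.Ioi 0)) := by
      refine ContinuousOn.aestronglyMeasurable ?_ measurableSet_Ioi
      intro t ht
      exact ((Real.continuousAt_rpow_const t _ (Or.inl (ne_of_gt ht))).inv₀
        (Real.rpow_pos_of_pos ht _).ne').continuousWithinAt
    refine (h2.smul h1).congr ?_
    filter_upwards [ae_restrict_mem measurableSet_Ioi] with t ht
    show (t ^ (s.re + α * ρ - 1))⁻¹ • t ^ (s.re + α * ρ - 1) • f t = f t
    rw [smul_smul, inv_mul_cancel₀ (Real.rpow_pos_of_pos ht _).ne', one_smul]
  set F : ℝ × ℝ → ℂ := fun p =>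
    Set.indicator {q : ℝ × ℝ | q.1 < q.2}
      (fun q => (q.1 : ℂ) ^ (s - 1) *
        ((q.2 ^ (ρ - 1) * (q.2 ^ ρ - q.1 ^ ρ) ^ (α - 1) : ℝ) : ℂ) * f q.2) p with hF
  have hlt : MeasurableSet {q : ℝ × ℝ | q.1 < q.2} :=
    measurableSet_lt measurable_fst measurable_snd
  have hFmeas : AEStronglyMeasurable F
      ((volume.restrict (Set.Ioi 0)).prod (volume.restrict (Set.Ioi 0))) := by
    rw [hF, aestronglyMeasurable_indicator_iff hlt]
    have hmeq : (((volume.restrict (Set.Ioi 0)).prod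
          (volume.restrict (Set.Ioi 0)))).restrict {q : ℝ × ℝ | q.1 < q.2}
        = (volume.prod volume).restrict
            ({q : ℝ × ℝ | q.1 < q.2} ∩ (Set.Ioi 0 ×ˢ Set.Ioi 0)) := by
      rw [Measure.prod_restrict, Measure.restrict_restrict hlt]
    have hK : AEStronglyMeasurable (fun q : ℝ × ℝ => (q.1 : ℂ) ^ (s - 1) *
        ((q.2 ^ (ρ - 1) * (q.2 ^ ρ - q.1 ^ ρ) ^ (α - 1) : ℝ) : ℂ))
        ((((volume.restrict (Set.Ioi 0)).prod
          (volume.restrict (Set.Ioi 0)))).restrict {q : ℝ × ℝ | q.1 < q.2}) := by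
      rw [hmeq]
      refine ContinuousOn.aestronglyMeasurable ?_
        (hlt.inter (measurableSet_Ioi.prod measurableSet_Ioi))
      intro q hq
      have hq12 : q.1 < q.2 := hq.1
      have hq1 : 0 < q.1 := hq.2.1
      have hq2 : 0 < q.2 := hq.2.2
      refine ContinuousAt.continuousWithinAt ?_
      apply ContinuousAt.mul
      · exact ((Complex.continuous_ofReal.comp continuous_fst).continuousAt.cpow
          continuousAt_const (Complex.ofReal_mem_slitPlane.2 hq1))
      · refine Complex.continuous_ofReal.continuousAt.comp (ContinuousAt.mul ?_ ?_)
        · exact continuous_snd.continuousAt.rpow_const (Or.inl hq2.ne')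
        · refine ContinuousAt.rpow_const (ContinuousAt.sub
              (continuous_snd.continuousAt.rpow_const (Or.inl hq2.ne'))
              (continuous_fst.continuousAt.rpow_const (Or.inl hq1.ne'))) (Or.inl ?_)
          exact (sub_pos.mpr (Real.rpow_lt_rpow hq1.le hq12 hρ)).ne'
    have hfsnd : AEStronglyMeasurable (fun q : ℝ × ℝ => f q.2)
        ((volume.restrict (Set.Ioi 0)).prod (volume.restrict (Set.Ioi 0))) :=
      hfm.comp_quasiMeasurePreserving Measure.quasiMeasurePreserving_snd
    exact hK.mul hfsnd.restrict

  -- Integrability of F on the product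
  have hFint : Integrable F
      ((volume.restrict (Set.Ioi 0)).prod (volume.restrict (Set.Ioi 0))) := by
    rw [integrable_prod_iff' hFmeas]
    constructor
    · filter_upwards [ae_restrict_mem measurableSet_Ioi] with τ hτ
      have hrep : (fun x => F (x, τ)) = Set.indicator (Set.Iio τ)
          (fun x => (x : ℂ) ^ (s - 1) *
            ((τ ^ (ρ - 1) * (τ ^ ρ - x ^ ρ) ^ (α - 1) : ℝ) : ℂ) * f τ) := by
        funext x
        by_cases h : x < τ <;> simp [hF, Set.indicator_apply, h]
      rw [hrep, integrable_indicator_iff measurableSet_Iio, IntegrableOn,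
        Measure.restrict_restrict measurableSet_Iio, Set.Iio_inter_Ioi]
      have hkey := (key_integrableOn hρ hα (w := s) hsre hτ).mul_const
        (((τ ^ (ρ - 1) : ℝ) : ℂ) * f τ)
      refine IntegrableOn.congr_fun hkey (fun x hx => ?_) measurableSet_Ioo
      have hbase : (0:ℝ) ≤ τ ^ ρ - x ^ ρ :=
        (sub_pos.mpr (Real.rpow_lt_rpow hx.1.le hx.2 hρ)).le
      rw [Complex.ofReal_mul, Complex.ofReal_cpow hbase]
      push_cast
      ring
    · refine Integrable.congr ((hf.norm).const_mul
        (ρ⁻¹ * (Real.Gamma (s.re / ρ) * Real.Gamma α / Real.Gamma (s.re / ρ + α)))) ?_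
      filter_upwards [ae_restrict_mem measurableSet_Ioi] with τ hτ
      have hrep : ∀ x : ℝ, F (x, τ) = Set.indicator (Set.Iio τ)
          (fun x => (x : ℂ) ^ (s - 1) *
            ((τ ^ (ρ - 1) * (τ ^ ρ - x ^ ρ) ^ (α - 1) : ℝ) : ℂ) * f τ) x := by
        intro x
        by_cases h : x < τ <;> simp [hF, Set.indicator_apply, h]
      have hnorm : ∀ x ∈ Set.Ioo (0:ℝ) τ,
          ‖(x : ℂ) ^ (s - 1) * ((τ ^ (ρ - 1) * (τ ^ ρ - x ^ ρ) ^ (α - 1) : ℝ) : ℂ) * f τ‖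
            = (x ^ (s.re - 1) * (τ ^ ρ - x ^ ρ) ^ (α - 1)) * (τ ^ (ρ - 1) * ‖f τ‖) := by
        intro x hx
        have hbase : 0 < τ ^ ρ - x ^ ρ := sub_pos.mpr (Real.rpow_lt_rpow hx.1.le hx.2 hρ)
        rw [norm_mul, norm_mul,
          Complex.norm_cpow_eq_rpow_re_of_pos hx.1, Complex.norm_real, Real.norm_eq_abs,
          _root_.abs_of_nonneg (mul_nonneg (Real.rpow_nonneg (le_of_lt hτ) _)
            (Real.rpow_nonneg hbase.le _)),
          Complex.sub_re, Complex.one_re]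
        ring
      have h1 : (∫ x, ‖F (x, τ)‖ ∂(volume.restrict (Set.Ioi 0)))
          = ∫ x in Set.Ioo 0 τ,
              (x ^ (s.re - 1) * (τ ^ ρ - x ^ ρ) ^ (α - 1)) * (τ ^ (ρ - 1) * ‖f τ‖) := by
        simp only [hrep]
        have : (fun x => ‖Set.indicator (Set.Iio τ)
            (fun x => (x : ℂ) ^ (s - 1) *
              ((τ ^ (ρ - 1) * (τ ^ ρ - x ^ ρ) ^ (α - 1) : ℝ) : ℂ) * f τ) x‖)
            = Set.indicator (Set.Iio τ)
              (fun x => ‖(x : ℂ) ^ (s - 1) *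
                ((τ ^ (ρ - 1) * (τ ^ ρ - x ^ ρ) ^ (α - 1) : ℝ) : ℂ) * f τ‖) := by
          funext x
          exact norm_indicator_eq_indicator_norm _ x
        rw [this, setIntegral_indicator measurableSet_Iio, Set.Ioi_inter_Iio]
        exact setIntegral_congr_fun measurableSet_Ioo hnorm
      have hτpow : τ ^ (s.re + α * ρ - ρ) * τ ^ (ρ - 1) = τ ^ (s.re + α * ρ - 1) := by
        rw [← Real.rpow_add hτ]
        ring_nf
      rw [h1, integral_mul_const, key_value_real hρ hα hsre hτ, norm_smul,
        Real.norm_eq_abs, _root_.abs_of_pos (Real.rpow_pos_of_pos hτ _), ← hτpow]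
      ring

  -- Main computation
  have step1 : ∀ x ∈ Set.Ioi (0:ℝ),
      (x : ℂ) ^ (s - 1) • genFracIntegralRight ρ α f x
        = (ρ ^ (1 - α) / Real.Gamma α : ℝ) •
            ∫ τ, F (x, τ) ∂(volume.restrict (Set.Ioi 0)) := by
    intro x hx
    have hrep : ∀ τ : ℝ, F (x, τ) = Set.indicator (Set.Ioi x)
        (fun τ => (x : ℂ) ^ (s - 1) *
          ((τ ^ (ρ - 1) * (τ ^ ρ - x ^ ρ) ^ (α - 1) : ℝ) : ℂ) * f τ) τ := by
      intro τ
      by_cases h : x < τ <;> simp [hF, Set.indicator_apply, h]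
    simp only [genFracIntegralRight, hrep]
    rw [smul_comm]
    congr 1
    rw [setIntegral_indicator measurableSet_Ioi,
      Set.inter_eq_self_of_subset_right (Set.Ioi_subset_Ioi (le_of_lt hx)),
      smul_eq_mul, ← integral_const_mul]
    refine setIntegral_congr_fun measurableSet_Ioi (fun τ hτ => ?_)
    rw [Complex.real_smul]
    ring
  have step3 : ∀ τ ∈ Set.Ioi (0:ℝ),
      (∫ x, F (x, τ) ∂(volume.restrict (Set.Ioi 0)))
        = ((ρ : ℂ)⁻¹ * Complex.betaIntegral (s / ρ) α) *
            ((τ : ℂ) ^ (s + (α : ℂ) * ρ - 1) * f τ) := by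
    intro τ hτ
    have hrep : ∀ x : ℝ, F (x, τ) = Set.indicator (Set.Iio τ)
        (fun x => (x : ℂ) ^ (s - 1) *
          ((τ ^ (ρ - 1) * (τ ^ ρ - x ^ ρ) ^ (α - 1) : ℝ) : ℂ) * f τ) x := by
      intro x
      by_cases h : x < τ <;> simp [hF, Set.indicator_apply, h]
    simp only [hrep]
    rw [setIntegral_indicator measurableSet_Iio, Set.Ioi_inter_Iio]
    have hcongr : ∫ x in Set.Ioo 0 τ, (x : ℂ) ^ (s - 1) *
          ((τ ^ (ρ - 1) * (τ ^ ρ - x ^ ρ) ^ (α - 1) : ℝ) : ℂ) * f τ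
        = ∫ x in Set.Ioo 0 τ, ((x : ℂ) ^ (s - 1) *
            ((τ ^ ρ - x ^ ρ : ℝ) : ℂ) ^ ((α : ℂ) - 1)) *
            (((τ ^ (ρ - 1) : ℝ) : ℂ) * f τ) := by
      refine setIntegral_congr_fun measurableSet_Ioo (fun x hx => ?_)
      have hbase : (0:ℝ) ≤ τ ^ ρ - x ^ ρ :=
        (sub_pos.mpr (Real.rpow_lt_rpow hx.1.le hx.2 hρ)).le
      rw [Complex.ofReal_mul, Complex.ofReal_cpow hbase]
      push_cast
      ring
    rw [hcongr, integral_mul_const, key_value hρ hα hsre hτ]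
    have hpow : (τ : ℂ) ^ (s + ((α * ρ : ℝ) : ℂ) - ρ) * ((τ ^ (ρ - 1) : ℝ) : ℂ)
        = (τ : ℂ) ^ (s + (α : ℂ) * ρ - 1) := by
      rw [Complex.ofReal_cpow (le_of_lt hτ),
        ← Complex.cpow_add _ _ (Complex.ofReal_ne_zero.mpr (ne_of_gt hτ))]
      congr 1
      push_cast
      ring
    rw [← hpow]
    ring
  have main : mellin (genFracIntegralRight ρ α f) s
      = (ρ ^ (1 - α) / Real.Gamma α : ℝ) •
          (((ρ : ℂ)⁻¹ * Complex.betaIntegral (s / ρ) α) *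
            mellin f (s + (α : ℂ) * ρ)) := by
    calc mellin (genFracIntegralRight ρ α f) s
        = ∫ x in Set.Ioi (0:ℝ), (x : ℂ) ^ (s - 1) • genFracIntegralRight ρ α f x := rfl
      _ = ∫ x in Set.Ioi (0:ℝ), ((ρ ^ (1 - α) / Real.Gamma α : ℝ) •
            ∫ τ, F (x, τ) ∂(volume.restrict (Set.Ioi 0))) :=
          setIntegral_congr_fun measurableSet_Ioi step1
      _ = (ρ ^ (1 - α) / Real.Gamma α : ℝ) •
            ∫ x in Set.Ioi (0:ℝ), (∫ τ, F (x, τ) ∂(volume.restrict (Set.Ioi 0))) :=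
          integral_smul _ _
      _ = (ρ ^ (1 - α) / Real.Gamma α : ℝ) •
            ∫ τ in Set.Ioi (0:ℝ), (∫ x, F (x, τ) ∂(volume.restrict (Set.Ioi 0))) := by
          congr 1
          exact MeasureTheory.integral_integral_swap
            (f := fun x τ => F (x, τ)) hFint
      _ = (ρ ^ (1 - α) / Real.Gamma α : ℝ) •
            ∫ τ in Set.Ioi (0:ℝ), ((ρ : ℂ)⁻¹ * Complex.betaIntegral (s / ρ) α) *
              ((τ : ℂ) ^ (s + (α : ℂ) * ρ - 1) * f τ) := by
          congr 1
          exact setIntegral_congr_fun measurableSet_Ioi step3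
      _ = (ρ ^ (1 - α) / Real.Gamma α : ℝ) •
            (((ρ : ℂ)⁻¹ * Complex.betaIntegral (s / ρ) α) *
              mellin f (s + (α : ℂ) * ρ)) := by
          rw [integral_const_mul]
          rfl
  rw [main]
  have hΓ2ne : Complex.Gamma (s / ρ + α) ≠ 0 := by
    refine Complex.Gamma_ne_zero_of_re_pos ?_
    rw [Complex.add_re]
    have : 0 < ((α : ℂ)).re := hαre
    linarith [hsρre]
  have hBeta : Complex.betaIntegral (s / ρ) α
      = Complex.Gamma (s / ρ) * Complex.Gamma α / Complex.Gamma (s / ρ + α) := by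
    rw [eq_div_iff hΓ2ne, mul_comm]
    exact (Complex.Gamma_mul_Gamma_eq_betaIntegral hsρre hαre).symm
  have hΓαr : (0:ℝ) < Real.Gamma α := Real.Gamma_pos_of_pos hα
  have hΓαne : ((Real.Gamma α : ℝ) : ℂ) ≠ 0 := Complex.ofReal_ne_zero.mpr hΓαr.ne'
  have hPne : ((ρ : ℂ) ^ (α : ℂ)) ≠ 0 := by
    simp [Complex.cpow_eq_zero_iff, hρc]
  have hkeyc : ((ρ ^ (1 - α) : ℝ) : ℂ) * (ρ : ℂ)⁻¹ = ((ρ : ℂ) ^ (α : ℂ))⁻¹ := by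
    rw [Complex.ofReal_cpow hρ.le,
      show ((1 - α : ℝ) : ℂ) = 1 - (α : ℂ) by push_cast; ring,
      Complex.cpow_sub _ _ hρc, Complex.cpow_one]
    field_simp
  have hconst : (((ρ ^ (1 - α) : ℝ) : ℂ) / ((Real.Gamma α : ℝ) : ℂ)) *
      ((ρ : ℂ)⁻¹ * (Complex.Gamma (s / ρ) * Complex.Gamma α / Complex.Gamma (s / ρ + α)))
      = Complex.Gamma (s / ρ) / (Complex.Gamma (s / ρ + α) * (ρ : ℂ) ^ (α : ℂ)) := by
    rw [Complex.Gamma_ofReal,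
      show (((ρ ^ (1 - α) : ℝ) : ℂ) / ((Real.Gamma α : ℝ) : ℂ)) *
          ((ρ : ℂ)⁻¹ * (Complex.Gamma (s / ρ) * ((Real.Gamma α : ℝ) : ℂ) /
            Complex.Gamma (s / ρ + α)))
        = (((ρ ^ (1 - α) : ℝ) : ℂ) * (ρ : ℂ)⁻¹) *
            (Complex.Gamma (s / ρ) / Complex.Gamma (s / ρ + α)) *
            (((Real.Gamma α : ℝ) : ℂ) / ((Real.Gamma α : ℝ) : ℂ)) from by ring,
      hkeyc, div_self hΓαne, mul_one]
    ring
  rw [hBeta, Complex.real_smul, Complex.ofReal_div, ← mul_assoc, hconst]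
end

section
/- Let α > 0 and let s be a real number with s < 0. Then the Mellin multiplier of the generalized fractional integral tends to (-s)^{-α} as ρ → 0⁺: lim_{ρ→0⁺} Γ(1 - s/ρ - α) / (Γ(1 - s/ρ) ρ^α) = (-s)^{-α}. -/
open Filter Real Topology

private lemma ratio_tendsto_small {a : ℝ} (ha : 0 < a) (ha1 : a < 1) :
    Tendsto (fun x : ℝ => Real.Gamma (x + a) / (Real.Gamma x * x ^ a)) atTop (𝓝 1) := by
  have hlo : Tendsto (fun x : ℝ => (x / (x + a)) ^ (1 - a)) atTop (𝓝 1) := by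
    have h1 : Tendsto (fun x : ℝ => x / (x + a)) atTop (𝓝 1) := by
      have h2 : Tendsto (fun x : ℝ => 1 - a / (x + a)) atTop (𝓝 (1 - 0)) := by
        exact tendsto_const_nhds.sub
          (tendsto_const_nhds.div_atTop (tendsto_atTop_add_const_right _ a tendsto_id))
      rw [sub_zero] at h2
      refine h2.congr' ?_
      filter_upwards [eventually_gt_atTop (0 : ℝ)] with x hx
      have hxa : x + a ≠ 0 := by positivity
      field_simp
      ring
    have := h1.rpow_const (p := 1 - a) (Or.inl one_ne_zero)
    rwa [Real.one_rpow] at this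
  refine tendsto_of_tendsto_of_tendsto_of_le_of_le' hlo tendsto_const_nhds ?_ ?_
  · filter_upwards [eventually_gt_atTop (0 : ℝ)] with x hx
    have hxa : 0 < x + a := by linarith
    have hGx := Real.Gamma_pos_of_pos hx
    have hGxa := Real.Gamma_pos_of_pos hxa
    have key := Real.Gamma_mul_add_mul_le_rpow_Gamma_mul_rpow_Gamma hxa
      (by linarith : (0:ℝ) < x + a + 1) ha (by linarith : 0 < 1 - a) (by ring)
    have harg : a * (x + a) + (1 - a) * (x + a + 1) = x + 1 := by ring
    rw [harg, Real.Gamma_add_one hx.ne', Real.Gamma_add_one hxa.ne',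
      Real.mul_rpow hxa.le hGxa.le, ← mul_assoc, mul_comm (Real.Gamma (x+a) ^ a),
      mul_assoc, ← Real.rpow_add hGxa, add_sub_cancel, Real.rpow_one] at key
    rw [le_div_iff₀ (by positivity), Real.div_rpow hx.le hxa.le, div_mul_eq_mul_div,
      div_le_iff₀ (Real.rpow_pos_of_pos hxa _)]
    calc x ^ (1 - a) * (Real.Gamma x * x ^ a)
        = (x ^ (1 - a) * x ^ a) * Real.Gamma x := by ring
      _ = x * Real.Gamma x := by
          rw [← Real.rpow_add hx, sub_add_cancel, Real.rpow_one]
      _ ≤ (x + a) ^ (1 - a) * Real.Gamma (x + a) := key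
      _ = Real.Gamma (x + a) * (x + a) ^ (1 - a) := by ring
  · filter_upwards [eventually_gt_atTop (0 : ℝ)] with x hx
    have hGx := Real.Gamma_pos_of_pos hx
    have key := Real.Gamma_mul_add_mul_le_rpow_Gamma_mul_rpow_Gamma hx
      (by linarith : (0:ℝ) < x + 1) (by linarith : 0 < 1 - a) ha (by ring)
    have harg : (1 - a) * x + a * (x + 1) = x + a := by ring
    rw [harg, Real.Gamma_add_one hx.ne', Real.mul_rpow hx.le hGx.le,
      mul_comm (x ^ a), ← mul_assoc, ← Real.rpow_add hGx,
      sub_add_cancel, Real.rpow_one] at key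
    rw [div_le_one (by positivity)]
    exact key

private lemma ratio_tendsto : ∀ (a : ℝ), 0 < a →
    Tendsto (fun x : ℝ => Real.Gamma (x + a) / (Real.Gamma x * x ^ a)) atTop (𝓝 1) := by
  have main : ∀ n : ℕ, ∀ a : ℝ, 0 < a → a ≤ n →
      Tendsto (fun x : ℝ => Real.Gamma (x + a) / (Real.Gamma x * x ^ a)) atTop (𝓝 1) := by
    intro n
    induction n with
    | zero => intro a ha han; simp at han; linarith
    | succ n ih =>
      intro a ha han
      rcases lt_trichotomy a 1 with h | h | h
      · exact ratio_tendsto_small ha h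
      · subst h
        have : Tendsto (fun _ : ℝ => (1 : ℝ)) atTop (𝓝 1) := tendsto_const_nhds
        refine this.congr' ?_
        filter_upwards [eventually_gt_atTop (0 : ℝ)] with x hx
        have hGx := Real.Gamma_pos_of_pos hx
        rw [Real.Gamma_add_one hx.ne', Real.rpow_one]
        field_simp
      · have h' := ih (a - 1) (by linarith) (by push_cast at han ⊢; linarith)
        have hfrac : Tendsto (fun x : ℝ => (x + (a - 1)) / x) atTop (𝓝 1) := by
          have h2 : Tendsto (fun x : ℝ => 1 + (a - 1) / x) atTop (𝓝 (1 + 0)) :=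
            tendsto_const_nhds.add (tendsto_const_nhds.div_atTop tendsto_id)
          rw [add_zero] at h2
          refine h2.congr' ?_
          filter_upwards [eventually_gt_atTop (0 : ℝ)] with x hx
          field_simp
        have hmul := hfrac.mul h'
        rw [one_mul] at hmul
        refine hmul.congr' ?_
        filter_upwards [eventually_gt_atTop (1 - a : ℝ), eventually_gt_atTop (0 : ℝ)]
          with x hx1 hx0
        have hxa : 0 < x + (a - 1) := by linarith
        have hGx := Real.Gamma_pos_of_pos hx0
        have heq : x + a = (x + (a - 1)) + 1 := by ring
        rw [heq, Real.Gamma_add_one hxa.ne']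
        have hxpow : x ^ a = x ^ (a - 1) * x := by
          rw [← Real.rpow_add_one hx0.ne']; ring_nf
        rw [hxpow]
        have h1 : Real.Gamma (x + (a - 1)) ≠ 0 := (Real.Gamma_pos_of_pos hxa).ne'
        have h2 : x ^ (a - 1) ≠ 0 := (Real.rpow_pos_of_pos hx0 _).ne'
        field_simp
  intro a ha
  obtain ⟨n, hn⟩ := exists_nat_ge a
  exact main n a ha hn

/-- For `α > 0` and real `s < 0`, the Mellin multiplier of the
generalized fractional integral tends to `(-s)^{-α}` as `ρ → 0⁺`:
`lim_{ρ→0⁺} Γ(1 - s/ρ - α)/(Γ(1 - s/ρ) ρ^α) = (-s)^{-α}`. -/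
theorem mellin_multiplier_tendsto (α s : ℝ) (hα : 0 < α) (hs : s < 0) :
    Tendsto
      (fun ρ : ℝ => Real.Gamma (1 - s / ρ - α) / (Real.Gamma (1 - s / ρ) * ρ ^ α))
      (nhdsWithin 0 (Set.Ioi (0 : ℝ)))
      (nhds ((-s) ^ (-α))) := by
  set X : ℝ → ℝ := fun ρ => 1 - s / ρ - α with hX
  have hXtop : Tendsto X (nhdsWithin 0 (Set.Ioi (0 : ℝ))) atTop := by
    have h1 : Tendsto (fun ρ : ℝ => (-s) * ρ⁻¹) (nhdsWithin 0 (Set.Ioi (0 : ℝ))) atTop :=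
      (tendsto_inv_nhdsGT_zero).const_mul_atTop (by linarith)
    have h2 := tendsto_atTop_add_const_right _ (1 - α) h1
    refine h2.congr fun ρ => ?_
    simp only [hX]
    field_simp
    ring
  -- the ratio part tends to 1
  have hr := (ratio_tendsto α hα).comp hXtop
  -- (X ρ * ρ) ^ (-α) tends to (-s) ^ (-α)
  have hXρ : Tendsto (fun ρ : ℝ => X ρ * ρ) (nhdsWithin 0 (Set.Ioi (0 : ℝ))) (𝓝 (-s)) := by
    have h1 : Tendsto (fun ρ : ℝ => ρ - s - α * ρ) (nhdsWithin 0 (Set.Ioi (0 : ℝ)))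
        (𝓝 (0 - s - α * 0)) := by
      apply Tendsto.sub
      apply Tendsto.sub
      · exact tendsto_nhdsWithin_of_tendsto_nhds tendsto_id
      · exact tendsto_const_nhds
      · exact tendsto_const_nhds.mul (tendsto_nhdsWithin_of_tendsto_nhds tendsto_id)
    rw [show (0:ℝ) - s - α * 0 = -s by ring] at h1
    refine h1.congr' ?_
    filter_upwards [self_mem_nhdsWithin] with ρ (hρ : 0 < ρ)
    simp only [hX]
    field_simp
  have hpow : Tendsto (fun ρ : ℝ => (X ρ * ρ) ^ (-α)) (nhdsWithin 0 (Set.Ioi (0 : ℝ)))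
      (𝓝 ((-s) ^ (-α))) := hXρ.rpow_const (Or.inl (by linarith))
  have hinv := hr.inv₀ one_ne_zero
  rw [inv_one] at hinv
  have hmul := hinv.mul hpow
  rw [one_mul] at hmul
  refine hmul.congr' ?_
  have hXev : ∀ᶠ ρ in nhdsWithin 0 (Set.Ioi (0 : ℝ)), 0 < X ρ :=
    hXtop.eventually (eventually_gt_atTop 0)
  filter_upwards [self_mem_nhdsWithin, hXev] with ρ (hρ : 0 < ρ) hXρ0
  have hGX := Real.Gamma_pos_of_pos hXρ0
  have hXα : (0:ℝ) < X ρ ^ α := Real.rpow_pos_of_pos hXρ0 _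
  have hXα' : X ρ + α = 1 - s / ρ := by simp only [hX]; ring
  have h2 : (0:ℝ) < Real.Gamma (X ρ + α) := Real.Gamma_pos_of_pos (by linarith)
  have hXdef : X ρ = 1 - s / ρ - α := rfl
  have alg : ∀ G1 G2 A B : ℝ, 0 < G1 → 0 < G2 → 0 < A → 0 < B →
      (G2 / (G1 * A))⁻¹ * (A⁻¹ * B⁻¹) = G1 / (G2 * B) := by
    intro G1 G2 A B h1 h2 h3 h4
    field_simp
  simp only [Function.comp_apply]
  rw [← hXdef, ← hXα', Real.mul_rpow hXρ0.le hρ.le, Real.rpow_neg hXρ0.le,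
    Real.rpow_neg hρ.le]
  exact alg _ _ _ _ hGX h2 hXα (Real.rpow_pos_of_pos hρ _)
end

section
/- Let a and b be real numbers. Then Γ(x + a)/Γ(x + b) is asymptotic to x^{a-b} as x → ∞; that is, lim_{x→∞} Γ(x + a) / (Γ(x + b) · x^{a-b}) = 1. -/
open Filter Real

open Topology
lemma aux_div_tendsto (c : ℝ) : Tendsto (fun x : ℝ => (x + c) / x) atTop (𝓝 1) := by
  have h : Tendsto (fun x : ℝ => 1 + c / x) atTop (𝓝 (1 + 0)) :=
    tendsto_const_nhds.add (tendsto_const_nhds.div_atTop tendsto_id)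
  rw [add_zero] at h
  refine h.congr' ?_
  filter_upwards [eventually_gt_atTop (0 : ℝ)] with x hx
  field_simp

lemma aux_div_tendsto' (c : ℝ) : Tendsto (fun x : ℝ => x / (x + c)) atTop (𝓝 1) := by
  have h := (aux_div_tendsto c).inv₀ one_ne_zero
  rw [inv_one] at h
  refine h.congr' ?_
  filter_upwards [eventually_gt_atTop (0 : ℝ)] with x hx
  simp [inv_div]

/-- Wendel's squeeze for `0 < s < 1`. -/
lemma wendel {s : ℝ} (hs : 0 < s) (hs1 : s < 1) :
    Tendsto (fun x : ℝ => Gamma (x + s) / (Gamma x * x ^ s)) atTop (𝓝 1) := by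
  have hlow : Tendsto (fun x : ℝ => (x / (x + s)) ^ (1 - s)) atTop (𝓝 1) := by
    have := (aux_div_tendsto' s).rpow_const (p := 1 - s) (Or.inl one_ne_zero)
    simpa using this
  refine tendsto_of_tendsto_of_tendsto_of_le_of_le' hlow tendsto_const_nhds ?_ ?_
  · -- lower bound : (x/(x+s))^(1-s) ≤ ratio
    filter_upwards [eventually_gt_atTop (0 : ℝ)] with x hx
    have hxs : 0 < x + s := by linarith
    have hG : 0 < Gamma x := Gamma_pos_of_pos hx
    have hGs : 0 < Gamma (x + s) := Gamma_pos_of_pos hxs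
    have key : Gamma (x + 1) ≤ Gamma (x + s) * (x + s) ^ (1 - s) := by
      have h := Gamma_mul_add_mul_le_rpow_Gamma_mul_rpow_Gamma (s := x + s) (t := x + s + 1)
        (a := s) (b := 1 - s) hxs (by linarith) hs (by linarith) (by ring)
      have e1 : s * (x + s) + (1 - s) * (x + s + 1) = x + 1 := by ring
      rw [e1] at h
      have e2 : Gamma (x + s + 1) = (x + s) * Gamma (x + s) := Gamma_add_one (by positivity)
      calc Gamma (x + 1) ≤ Gamma (x + s) ^ s * Gamma (x + s + 1) ^ (1 - s) := h
        _ = Gamma (x + s) ^ s * ((x + s) ^ (1 - s) * Gamma (x + s) ^ (1 - s)) := by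
            rw [e2, mul_rpow hxs.le hGs.le]
        _ = (Gamma (x + s) ^ s * Gamma (x + s) ^ (1 - s)) * (x + s) ^ (1 - s) := by ring
        _ = Gamma (x + s) * (x + s) ^ (1 - s) := by
            rw [← rpow_add hGs]; norm_num
    have key2 : x * Gamma x ≤ Gamma (x + s) * (x + s) ^ (1 - s) := by
      rwa [Gamma_add_one hx.ne'] at key
    rw [div_rpow hx.le hxs.le, div_le_div_iff₀ (by positivity) (by positivity)]
    calc x ^ (1 - s) * (Gamma x * x ^ s) = (x ^ (1-s) * x ^ s) * Gamma x := by ring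
      _ = x * Gamma x := by rw [← rpow_add hx]; norm_num
      _ ≤ Gamma (x + s) * (x + s) ^ (1 - s) := key2
  · -- upper bound : ratio ≤ 1
    filter_upwards [eventually_gt_atTop (0 : ℝ)] with x hx
    have hG : 0 < Gamma x := Gamma_pos_of_pos hx
    have h := Gamma_mul_add_mul_le_rpow_Gamma_mul_rpow_Gamma (s := x) (t := x + 1)
      (a := 1 - s) (b := s) hx (by linarith) (by linarith) hs (by ring)
    have e1 : (1 - s) * x + s * (x + 1) = x + s := by ring
    rw [e1] at h
    have key : Gamma (x + s) ≤ Gamma x * x ^ s := by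
      calc Gamma (x + s) ≤ Gamma x ^ (1 - s) * Gamma (x + 1) ^ s := h
        _ = Gamma x ^ (1 - s) * (x ^ s * Gamma x ^ s) := by
            rw [Gamma_add_one hx.ne', mul_rpow hx.le hG.le]
        _ = (Gamma x ^ (1 - s) * Gamma x ^ s) * x ^ s := by ring
        _ = Gamma x * x ^ s := by rw [← rpow_add hG]; norm_num
    rw [div_le_one (by positivity)]
    exact key

/-- Shift the parameter by 1. -/
lemma shift_up {c : ℝ} (h : Tendsto (fun x : ℝ => Gamma (x + c) / (Gamma x * x ^ c)) atTop (𝓝 1)) :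
    Tendsto (fun x : ℝ => Gamma (x + (c + 1)) / (Gamma x * x ^ (c + 1))) atTop (𝓝 1) := by
  have h2 := (aux_div_tendsto c).mul h
  rw [mul_one] at h2
  refine h2.congr' ?_
  filter_upwards [eventually_gt_atTop (max 0 (-c)) ] with x hx
  have hx0 : 0 < x := lt_of_le_of_lt (le_max_left _ _) hx
  have hxc : 0 < x + c := by have := lt_of_le_of_lt (le_max_right _ _) hx; linarith
  rw [show x + (c + 1) = (x + c) + 1 by ring, Gamma_add_one hxc.ne', rpow_add hx0 c 1,
    rpow_one]
  field_simp

lemma shift_down {c : ℝ}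
    (h : Tendsto (fun x : ℝ => Gamma (x + (c + 1)) / (Gamma x * x ^ (c + 1))) atTop (𝓝 1)) :
    Tendsto (fun x : ℝ => Gamma (x + c) / (Gamma x * x ^ c)) atTop (𝓝 1) := by
  have h2 := (aux_div_tendsto' c).mul h
  rw [mul_one] at h2
  refine h2.congr' ?_
  filter_upwards [eventually_gt_atTop (max 0 (-c))] with x hx
  have hx0 : 0 < x := lt_of_le_of_lt (le_max_left _ _) hx
  have hxc : 0 < x + c := by have := lt_of_le_of_lt (le_max_right _ _) hx; linarith
  have hG : Gamma (x + c) ≠ 0 := (Gamma_pos_of_pos hxc).ne'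
  rw [show x + (c + 1) = (x + c) + 1 by ring, Gamma_add_one hxc.ne', rpow_add hx0 c 1,
    rpow_one]
  have hGx : Gamma x ≠ 0 := (Gamma_pos_of_pos hx0).ne'
  have hrp : x ^ c ≠ 0 := (rpow_pos_of_pos hx0 c).ne'
  field_simp

/-- The one-parameter asymptotic for every real `c`. -/
lemma gamma_shift_asymptotic (c : ℝ) :
    Tendsto (fun x : ℝ => Gamma (x + c) / (Gamma x * x ^ c)) atTop (𝓝 1) := by
  -- write c = s + n with s ∈ (0,1], n : ℤ
  obtain ⟨s, n, hs0, hs1, rfl⟩ : ∃ (s : ℝ) (n : ℤ), 0 < s ∧ s ≤ 1 ∧ c = s + n := by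
    refine ⟨c - (⌈c⌉ - 1), ⌈c⌉ - 1, ?_, ?_, by push_cast; ring⟩
    · push_cast; have := Int.ceil_lt_add_one c; linarith
    · push_cast; have := Int.le_ceil c; linarith
  have base : Tendsto (fun x : ℝ => Gamma (x + s) / (Gamma x * x ^ s)) atTop (𝓝 1) := by
    rcases eq_or_lt_of_le hs1 with h1 | h1
    · subst h1
      refine Tendsto.congr' ?_ tendsto_const_nhds
      filter_upwards [eventually_gt_atTop (0 : ℝ)] with x hx
      rw [Gamma_add_one hx.ne', rpow_one]
      field_simp [(Gamma_pos_of_pos hx).ne']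
    · exact wendel hs0 h1
  induction n using Int.induction_on with
  | zero => simpa using base
  | succ k ih =>
      have := shift_up ih
      refine this.congr (fun x => by push_cast; ring_nf)
  | pred k ih =>
      have := shift_down (c := s + (-(k:ℝ) - 1)) ?_
      · refine this.congr (fun x => by push_cast; ring_nf)
      · refine ih.congr (fun x => by push_cast; ring_nf)


/-- For real `a` and `b`, `Γ(x + a)/Γ(x + b)` is asymptotic to
`x^{a-b}` as `x → ∞`: `lim_{x→∞} Γ(x + a)/(Γ(x + b) · x^{a-b}) = 1`. -/
theorem gamma_ratio_asymptotic (a b : ℝ) :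
    Tendsto
      (fun x : ℝ => Real.Gamma (x + a) / (Real.Gamma (x + b) * x ^ (a - b)))
      atTop (nhds 1) := by
  have ha := gamma_shift_asymptotic a
  have hb := gamma_shift_asymptotic b
  have h := ha.div hb one_ne_zero
  rw [div_one] at h
  refine h.congr' ?_
  filter_upwards [eventually_gt_atTop (max 0 (-b))] with x hx
  have hx0 : 0 < x := lt_of_le_of_lt (le_max_left _ _) hx
  have hxb : 0 < x + b := by have := lt_of_le_of_lt (le_max_right _ _) hx; linarith
  have hGx : Gamma x ≠ 0 := (Gamma_pos_of_pos hx0).ne'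
  have hGb : Gamma (x + b) ≠ 0 := (Gamma_pos_of_pos hxb).ne'
  have hra : x ^ a ≠ 0 := (rpow_pos_of_pos hx0 a).ne'
  have hrb : x ^ b ≠ 0 := (rpow_pos_of_pos hx0 b).ne'
  rw [Pi.div_apply, rpow_sub hx0]
  field_simp
end

section
/- Let n ≥ 1 be a natural number and let f : ℝ → ℝ be n-times continuously differentiable on (0,∞). Then for every x > 0, the n-th iterate of the operator δ₂ = x²·(d/dx) applied to f satisfies (x² d/dx)^n f(x) = Σ_{j=1}^n L(n,j) x^{n+j} f^{(j)}(x), where L(n,j) = C(n-1, j-1) · n!/j! are the unsigned Lah numbers. -/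
open Filter Real Finset

/-- The operator `δ₂ = x² · (d/dx)` acting on real functions. -/
noncomputable def delta2 (f : ℝ → ℝ) : ℝ → ℝ := fun x => x ^ 2 * deriv f x

/-- The unsigned Lah numbers `L(n,j) = C(n-1, j-1) · n!/j!`, as real numbers. -/
noncomputable def lahNumber (n j : ℕ) : ℝ :=
  ((n - 1).choose (j - 1) : ℝ) * (n.factorial : ℝ) / (j.factorial : ℝ)

lemma my_iteratedDerivWithin_of_isOpen {f : ℝ → ℝ} {s : Set ℝ} (j : ℕ) (hs : IsOpen s)
    {x : ℝ} (hx : x ∈ s) : iteratedDerivWithin j f s x = iteratedDeriv j f x := by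
  simp only [iteratedDerivWithin_eq_iteratedFDerivWithin, iteratedDeriv_eq_iteratedFDeriv,
    iteratedFDerivWithin_of_isOpen j hs hx]

lemma my_hasDerivAt_iteratedDeriv {N : ℕ} {f : ℝ → ℝ}
    (hf : ContDiffOn ℝ (N : ℕ∞) f (Set.Ioi 0)) {j : ℕ} (hj : j < N) {x : ℝ} (hx : 0 < x) :
    HasDerivAt (iteratedDeriv j f) (iteratedDeriv (j + 1) f x) x := by
  have hs : IsOpen (Set.Ioi (0:ℝ)) := isOpen_Ioi
  have h1 : DifferentiableOn ℝ (iteratedDerivWithin j f (Set.Ioi 0)) (Set.Ioi 0) :=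
    hf.differentiableOn_iteratedDerivWithin (by exact_mod_cast hj) hs.uniqueDiffOn
  have h2 : DifferentiableAt ℝ (iteratedDerivWithin j f (Set.Ioi 0)) x :=
    (h1 x hx).differentiableAt (hs.mem_nhds hx)
  have heq : iteratedDerivWithin j f (Set.Ioi 0) =ᶠ[nhds x] iteratedDeriv j f :=
    Filter.eventuallyEq_of_mem (hs.mem_nhds hx)
      (fun y hy => my_iteratedDerivWithin_of_isOpen j hs hy)
  have h3 : DifferentiableAt ℝ (iteratedDeriv j f) x := h2.congr_of_eventuallyEq heq.symm
  have h4 := h3.hasDerivAt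
  rw [iteratedDeriv_succ]
  exact h4

lemma my_choose_id (m k : ℕ) (hk : k ≤ m) :
    ((m+1).choose (k+1) : ℝ) * (m+2) =
      ((m:ℝ)+k+3) * (m.choose (k+1)) + ((k:ℝ)+2) * (m.choose k) := by
  have h1 : (m.choose (k+1) * (k+1) : ℕ) = m.choose k * (m - k) := Nat.choose_succ_right_eq m k
  have h1' : (m.choose (k+1) : ℝ) * ((k:ℝ)+1) = (m.choose k : ℝ) * ((m:ℝ) - k) := by
    have := congrArg (Nat.cast (R := ℝ)) h1
    push_cast [Nat.cast_sub hk] at this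
    linarith [this]
  have h3 : ((m+1).choose (k+1) : ℕ) = m.choose k + m.choose (k+1) := Nat.choose_succ_succ m k
  rw [h3]
  push_cast
  nlinarith [h1']

lemma my_lah_step (n i : ℕ) (hn : 1 ≤ n) (hi : i < n) :
    lahNumber (n+1) (i+2) = ((n:ℝ)+2+(i:ℝ)) * lahNumber n (i+2) + lahNumber n (i+1) := by
  obtain ⟨m, rfl⟩ : ∃ m, n = m + 1 := ⟨n - 1, by omega⟩
  have hk : i ≤ m := by omega
  unfold lahNumber
  simp only [Nat.add_sub_cancel]
  rw [show i + 2 - 1 = i + 1 by omega]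
  have hf1 : ((m+1+1).factorial : ℝ) = ((m:ℝ)+2) * ((m+1).factorial : ℝ) := by
    rw [Nat.factorial_succ]; push_cast; ring
  have hf2 : ((i+2).factorial : ℝ) = ((i:ℝ)+2) * ((i+1).factorial : ℝ) := by
    rw [Nat.factorial_succ]; push_cast; ring
  rw [hf1, hf2]
  have h1 : ((i+1).factorial : ℝ) ≠ 0 := by positivity
  have h2 : ((i:ℝ)+2) ≠ 0 := by positivity
  have key := my_choose_id m i hk
  field_simp
  push_cast
  linear_combination key

lemma my_lah_top (n : ℕ) (hn : 1 ≤ n) : lahNumber n (n+1) = 0 := by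
  unfold lahNumber
  rw [Nat.choose_eq_zero_of_lt (by omega)]
  simp

lemma my_lah_head (n : ℕ) (hn : 1 ≤ n) : lahNumber (n+1) 1 = ((n:ℝ)+1) * lahNumber n 1 := by
  unfold lahNumber
  norm_num [Nat.choose_zero_right, Nat.factorial_succ]

lemma my_aux (f : ℝ → ℝ) (n : ℕ) (hn : 1 ≤ n)
    (hf : ContDiffOn ℝ (n : ℕ∞) f (Set.Ioi 0)) :
    ∀ x : ℝ, 0 < x → (delta2^[n] f) x =
      ∑ i ∈ Finset.range n, lahNumber n (i+1) * x ^ (n+1+i) * iteratedDeriv (i+1) f x := by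
  induction n, hn using Nat.le_induction with
  | base =>
    intro x hx
    simp [delta2, lahNumber, iteratedDeriv_one]
  | succ n hn IH =>
    intro x hx
    have hfn : ContDiffOn ℝ (n : ℕ∞) f (Set.Ioi 0) := hf.of_le (by exact_mod_cast Nat.le_succ n)
    have IH' := IH hfn
    -- the polynomial expression for delta2^[n] f
    set g : ℝ → ℝ := fun y =>
      ∑ i ∈ Finset.range n, lahNumber n (i+1) * y ^ (n+1+i) * iteratedDeriv (i+1) f y with hg
    have heq : (delta2^[n] f) =ᶠ[nhds x] g :=
      Filter.eventuallyEq_of_mem (isOpen_Ioi.mem_nhds hx) (fun y hy => IH' y hy)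
    have hgd : HasDerivAt g
        (∑ i ∈ Finset.range n,
          (lahNumber n (i+1) * ((↑(n+1+i) : ℝ) * x ^ (n+i)) * iteratedDeriv (i+1) f x
            + lahNumber n (i+1) * x ^ (n+1+i) * iteratedDeriv (i+2) f x)) x := by
      apply HasDerivAt.fun_sum
      intro i hi
      have hD : HasDerivAt (iteratedDeriv (i+1) f) (iteratedDeriv (i+2) f x) x :=
        my_hasDerivAt_iteratedDeriv hf (by simp at hi; omega) hx
      have hp : HasDerivAt (fun y : ℝ => y ^ (n+1+i)) ((↑(n+1+i) : ℝ) * x ^ (n+i)) x := by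
        have := hasDerivAt_pow (n+1+i) x
        rwa [show n+1+i-1 = n+i by omega] at this
      exact (hp.const_mul (lahNumber n (i+1))).mul hD
    have hstep : (delta2^[n+1] f) x = x ^ 2 * deriv g x := by
      rw [Function.iterate_succ_apply']
      show x ^ 2 * deriv (delta2^[n] f) x = x ^ 2 * deriv g x
      rw [heq.deriv_eq]
    rw [hstep, hgd.deriv]
    -- now pure algebra with sums
    rw [Finset.mul_sum]
    have expand : ∀ i ∈ Finset.range n,
        x ^ 2 * (lahNumber n (i+1) * ((↑(n+1+i) : ℝ) * x ^ (n+i)) * iteratedDeriv (i+1) f x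
          + lahNumber n (i+1) * x ^ (n+1+i) * iteratedDeriv (i+2) f x)
        = ((↑n:ℝ)+1+i) * lahNumber n (i+1) * x ^ (n+2+i) * iteratedDeriv (i+1) f x
          + lahNumber n (i+1) * x ^ (n+3+i) * iteratedDeriv (i+2) f x := by
      intro i _
      have e1 : x ^ (n+2+i) = x ^ (n+i) * x ^ 2 := by rw [← pow_add]; ring_nf
      have e2 : x ^ (n+3+i) = x ^ (n+1+i) * x ^ 2 := by rw [← pow_add]; ring_nf
      rw [e1, e2]
      push_cast
      ring
    rw [Finset.sum_congr rfl expand, Finset.sum_add_distrib]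
    -- S1: extend to range (n+1) using the vanishing top term, then shift
    have hS1 : ∑ i ∈ Finset.range n,
        ((↑n:ℝ)+1+i) * lahNumber n (i+1) * x ^ (n+2+i) * iteratedDeriv (i+1) f x
      = ∑ i ∈ Finset.range n,
          ((↑n:ℝ)+2+i) * lahNumber n (i+2) * x ^ (n+3+i) * iteratedDeriv (i+2) f x
        + ((↑n:ℝ)+1) * lahNumber n 1 * x ^ (n+2) * iteratedDeriv 1 f x := by
      have h0 : ∑ i ∈ Finset.range (n+1),
          ((↑n:ℝ)+1+i) * lahNumber n (i+1) * x ^ (n+2+i) * iteratedDeriv (i+1) f x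
        = ∑ i ∈ Finset.range n,
          ((↑n:ℝ)+1+i) * lahNumber n (i+1) * x ^ (n+2+i) * iteratedDeriv (i+1) f x := by
        rw [Finset.sum_range_succ, my_lah_top n hn]
        simp
      rw [← h0, Finset.sum_range_succ']
      have hshift : ∀ i ∈ Finset.range n,
          ((↑n:ℝ)+1+(↑(i+1):ℝ)) * lahNumber n ((i+1)+1) * x ^ (n+2+(i+1))
              * iteratedDeriv ((i+1)+1) f x
          = ((↑n:ℝ)+2+i) * lahNumber n (i+2) * x ^ (n+3+i) * iteratedDeriv (i+2) f x := by
        intro i _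
        have h9 : n+2+(i+1) = n+3+i := by omega
        have h8 : (i+1)+1 = i+2 := by omega
        rw [h9, h8]
        push_cast
        ring
      rw [Finset.sum_congr rfl hshift]
      norm_num
    rw [hS1]
    -- RHS: peel off the first term
    rw [Finset.sum_range_succ']
    have hhead : lahNumber (n+1) (0+1) * x ^ (n+1+1+0) * iteratedDeriv (0+1) f x
        = ((↑n:ℝ)+1) * lahNumber n 1 * x ^ (n+2) * iteratedDeriv 1 f x := by
      simp only [Nat.add_zero, Nat.zero_add]
      rw [my_lah_head n hn]
    rw [hhead]
    have hbody : ∀ i ∈ Finset.range n,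
        lahNumber (n+1) (i+1+1) * x ^ (n+1+1+(i+1)) * iteratedDeriv (i+1+1) f x
        = ((↑n:ℝ)+2+i) * lahNumber n (i+2) * x ^ (n+3+i) * iteratedDeriv (i+2) f x
          + lahNumber n (i+1) * x ^ (n+3+i) * iteratedDeriv (i+2) f x := by
      intro i hi
      have hi' : i < n := Finset.mem_range.mp hi
      have : n+1+1+(i+1) = n+3+i := by omega
      rw [this, my_lah_step n i hn hi']
      ring
    rw [Finset.sum_congr rfl hbody, Finset.sum_add_distrib]
    ring

/-- For `n ≥ 1` and `f : ℝ → ℝ` `n`-times continuously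
differentiable on `(0,∞)`, for every `x > 0`,
`(x² d/dx)^n f(x) = Σ_{j=1}^n L(n,j) x^{n+j} f^{(j)}(x)`. -/
theorem delta2_iterate_eq_lah_sum (n : ℕ) (hn : 1 ≤ n) (f : ℝ → ℝ)
    (hf : ContDiffOn ℝ (n : ℕ∞) f (Set.Ioi (0 : ℝ))) :
    ∀ x : ℝ, 0 < x →
      (delta2^[n] f) x =
        ∑ j ∈ Finset.Icc 1 n, lahNumber n j * x ^ (n + j) * iteratedDeriv j f x := by
  intro x hx
  rw [my_aux f n hn hf x hx, ← Finset.Ico_add_one_right_eq_Icc, Finset.sum_Ico_eq_sum_range]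
  apply Finset.sum_congr (by norm_num)
  intro i _
  have h1 : 1 + i = i + 1 := by omega
  have h2 : n + (1 + i) = n + 1 + i := by omega
  rw [h1, show n + (i + 1) = n + 1 + i by omega]
end
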